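/- Let b = 0 or 1 and let G be a graph (connected if b = 1). For classes O̅_S ∈ O̅^b(G−S) and O̅_T ∈ O̅^b(G−T) with S, T ∈ A^b_G, the following two conditions are equivalent when T ⊆ S: (i) there exist representatives O'_S ∈ O̅_S and O'_T ∈ O̅_T with (O'_T)|_{G−S} = O'_S; (ii) for every representative O'_S ∈ O̅_S there exists O'_T ∈ O̅_T with (O'_T)|_{G−S} = O'_S. Declaring O̅_S ≤ O̅_T iff T ⊆ S and (i) holds defines a partial order on O̅P^b_G = ⊔_{S ∈ A^b_G} O̅^b(G−S); the forgetful map O̅P^b_G → A^b_G sending O̅_S to S is a quotient of posets; and the map sending O̅_S to g(G−S) is a rank on O̅P^b_G. -/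

import Mathlib

/-!
Common framework: finite vertex-weighted multigraphs (loops and multiple edges
allowed), generalized orientations, divisors, contractions, and poset gadgets.

A graph is encoded by a finite set `V ⊆ ℕ` of vertices, a finite set `E ⊆ ℕ`
of edges, an "ends" function assigning to each edge its ordered pair of
end-vertices (the two components encode the two half-edges), and a weight
function `w : ℕ → ℕ`.

A generalized orientation is a function `ℕ → Option EdgeDir`, where `none`
means the edge is absent (an orientation on a spanning subgraph `G − S` takes
the value `none` exactly on edges outside `E \ S`), `fwd`/`bwd` give the edge a
single direction, and `bi` makes the edge bioriented.
-/

open scoped Classical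
open Finset

/-- Direction of an edge under a generalized orientation. -/
inductive EdgeDir : Type
  | fwd
  | bwd
  | bi
deriving DecidableEq

/-- Generalized orientation data. -/
abbrev Orient : Type := ℕ → Option EdgeDir

/-- The number of ending (target) half-edges at the vertex `v` of an edge with
end-pair `p`, given its direction `d`.  A one-way oriented edge has exactly
one target end; a bioriented edge has both ends as targets. -/
def dirT : Option EdgeDir → ℕ × ℕ → ℕ → ℕ
  | none, _, _ => 0
  | some EdgeDir.fwd, p, v => if p.2 = v then 1 else 0
  | some EdgeDir.bwd, p, v => if p.1 = v then 1 else 0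
  | some EdgeDir.bi, p, v => (if p.1 = v then 1 else 0) + (if p.2 = v then 1 else 0)

/-- Restriction of orientation data to the set `D` of kept edges. -/
def restr (O : Orient) (D : Finset ℕ) : Orient := fun e => if e ∈ D then O e else none

/-- A finite vertex-weighted multigraph. -/
structure MGraph : Type where
  V : Finset ℕ
  E : Finset ℕ
  ends : ℕ → ℕ × ℕ
  w : ℕ → ℕ
  ends_mem : ∀ e ∈ E, (ends e).1 ∈ V ∧ (ends e).2 ∈ V

namespace MGraph

variable (G : MGraph)

/-- Edge set of the induced subgraph `(G−S)[Z]`: edges of `G − S` with both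
ends in `Z`. -/
def indEdges (S Z : Finset ℕ) : Finset ℕ :=
  (G.E \ S).filter fun e => (G.ends e).1 ∈ Z ∧ (G.ends e).2 ∈ Z

/-- The cut `E(Z, Zᶜ)` in `G − S`: edges of `G − S` with exactly one end in `Z`. -/
def cutEdges (S Z : Finset ℕ) : Finset ℕ :=
  (G.E \ S).filter fun e =>
    ((G.ends e).1 ∈ Z ∧ (G.ends e).2 ∉ Z) ∨ ((G.ends e).1 ∉ Z ∧ (G.ends e).2 ∈ Z)

/-- Adjacency via an edge belonging to `F ∩ E`. -/
def adjOn (F : Finset ℕ) (u v : ℕ) : Prop :=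
  ∃ e ∈ F ∩ G.E, G.ends e = (u, v) ∨ G.ends e = (v, u)

/-- Number of connected components of the subgraph with vertex set `W` and
edge set `F`. -/
noncomputable def ncomp (W F : Finset ℕ) : ℕ :=
  Nat.card (Quot (fun u v : {x : ℕ // x ∈ W} => G.adjOn F u.1 v.1))

/-- The subgraph with vertex set `W` and edge set `F` is connected. -/
def ConnSub (W F : Finset ℕ) : Prop := G.ncomp W F = 1

/-- `G` is connected. -/
def Connected : Prop := G.ConnSub G.V G.E

/-- Genus of the subgraph with vertex set `W` and edge set `F`:
`∑_{v ∈ W} w(v) − |W| + |F| + c`. -/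
noncomputable def subGenus (W F : Finset ℕ) : ℤ :=
  (∑ v ∈ W, (G.w v : ℤ)) - (W.card : ℤ) + (((F ∩ G.E).card : ℤ)) + (G.ncomp W F : ℤ)

/-- The genus of `G`. -/
noncomputable def genus : ℤ := G.subGenus G.V G.E

/-- The degree of a vertex: the number of half-edges having `v` as end. -/
def deg (v : ℕ) : ℕ :=
  ∑ e ∈ G.E, ((if (G.ends e).1 = v then 1 else 0) + (if (G.ends e).2 = v then 1 else 0))

/-- `e` is a bridge of `G − S`: removing it increases the number of connected
components. -/
def IsBridge (S : Finset ℕ) (e : ℕ) : Prop :=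
  e ∈ G.E \ S ∧ G.ncomp G.V (G.E \ S) < G.ncomp G.V (G.E \ insert e S)

/-- The set of bridges of `G − S`. -/
noncomputable def bridges (S : Finset ℕ) : Finset ℕ := (G.E \ S).filter (G.IsBridge S)

/-- `T` is a cut of `G`, i.e. `T = E(Z, Zᶜ)` for some `∅ ⊊ Z ⊊ V`. -/
def IsCut (T : Finset ℕ) : Prop :=
  ∃ Z, Z ⊆ G.V ∧ Z.Nonempty ∧ Z ≠ G.V ∧ T = G.cutEdges ∅ Z

/-- `W` is (the vertex set of) a connected component of `G − S`. -/
def IsCompOf (S W : Finset ℕ) : Prop :=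
  W ⊆ G.V ∧ W.Nonempty ∧ G.ConnSub W (G.indEdges S W) ∧ G.cutEdges S W = ∅

/-- The poset `A^b_G`: for `b = 0` the sets `S ⊆ E` with `G − S` bridgeless,
for `b = 1` the sets `S ⊆ E` with `G − S` connected. -/
def Ab (b : ℕ) (S : Finset ℕ) : Prop :=
  S ⊆ G.E ∧ ((b = 0 ∧ ∀ e, ¬ G.IsBridge S e) ∨ (b = 1 ∧ G.ConnSub G.V (G.E \ S)))

/-- `G` is a stable graph of genus `g`: connected, of genus `g`, and every
vertex of weight `0` has degree at least `3`. -/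
noncomputable def Stable (g : ℕ) : Prop :=
  G.Connected ∧ G.genus = (g : ℤ) ∧ ∀ v ∈ G.V, G.w v = 0 → 3 ≤ G.deg v

/-! ### Generalized orientations on spanning subgraphs -/

/-- `O` is orientation data for the spanning subgraph `G − S` (it is defined
exactly on the edges of `G − S`). -/
def IsOrientOn (S : Finset ℕ) (O : Orient) : Prop :=
  ∀ e, O e ≠ none ↔ e ∈ G.E \ S

/-- The set of bioriented edges of `O`. -/
def biE (O : Orient) : Finset ℕ := G.E.filter fun e => O e = some EdgeDir.bi

/-- `t^O_v`: the number of half-edges having `v` as target. -/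
def tOr (O : Orient) (v : ℕ) : ℕ := ∑ e ∈ G.E, dirT (O e) (G.ends e) v

/-- `t^O(Z)`: the number of edges of `G − S` not contained in `(G−S)[Z]`
having a target in `Z`. -/
def tCut (S : Finset ℕ) (O : Orient) (Z : Finset ℕ) : ℕ :=
  ∑ e ∈ (G.E \ S) \ G.indEdges S Z, ∑ v ∈ Z, dirT (O e) (G.ends e) v

/-- The divisor `d^O` of a `b`-orientation `O` on `G − S`:
`d^O_v = w(v) − 1 + t^O_v` if `G − S` has edges, and `d^O_v = w(v) − 1 + b`
otherwise; it is supported on `V`. -/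
noncomputable def divOr (S : Finset ℕ) (b : ℕ) (O : Orient) : ℕ → ℤ :=
  fun v => if v ∈ G.V then
      (if G.E \ S = ∅ then (G.w v : ℤ) - 1 + (b : ℤ) else (G.w v : ℤ) - 1 + (G.tOr O v : ℤ))
    else 0

/-- Equivalence of generalized orientations on `G − S`:  both are orientations
on `G − S` and they have the same divisor. -/
noncomputable def equivOr (S : Finset ℕ) (b : ℕ) (O O' : Orient) : Prop :=
  G.IsOrientOn S O ∧ G.IsOrientOn S O' ∧ G.divOr S b O = G.divOr S b O'

/-- `O` is a totally cyclic orientation on `G − S`: every nonempty cut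
`E(Z,Zᶜ)` contains an edge with target in `Z` and an edge with target in `Zᶜ`. -/
def TotCyc (S : Finset ℕ) (O : Orient) : Prop :=
  ∀ Z : Finset ℕ, Z ⊆ G.V → Z.Nonempty → Z ≠ G.V → (G.cutEdges S Z).Nonempty →
    (∃ e ∈ G.cutEdges S Z, ∃ v ∈ Z, 0 < dirT (O e) (G.ends e) v) ∧
    (∃ e ∈ G.cutEdges S Z, ∃ v ∈ G.V \ Z, 0 < dirT (O e) (G.ends e) v)

/-- `O` is `e₀`-rooted on `G − S`: for every `Z ⊊ V` with `e₀` an edge of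
`(G−S)[Z]`, the cut `E(Z,Zᶜ)` contains an edge with target in `Zᶜ`. -/
def RootedAt (S : Finset ℕ) (O : Orient) (e₀ : ℕ) : Prop :=
  ∀ Z : Finset ℕ, Z ⊆ G.V → Z ≠ G.V → e₀ ∈ G.indEdges S Z →
    ∃ e ∈ G.cutEdges S Z, ∃ v ∈ G.V \ Z, 0 < dirT (O e) (G.ends e) v

/-- `O` is a rooted `1`-orientation on `G − S`:  it has exactly one bioriented
edge, at which it is rooted.  By convention, if `G − S` consists of a single
vertex (and no edges), the empty orientation is rooted. -/
def Rooted1 (S : Finset ℕ) (O : Orient) : Prop :=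
  (∃ e₀, G.biE O = {e₀} ∧ G.RootedAt S O e₀) ∨ (G.E \ S = ∅ ∧ G.V.card = 1)

/-- `O ∈ 𝒪^b(G−S)`:  for `b = 0`, a totally cyclic orientation on `G − S`;
for `b = 1`, a rooted `1`-orientation on `G − S`. -/
def MemOb (S : Finset ℕ) (b : ℕ) (O : Orient) : Prop :=
  G.IsOrientOn S O ∧
    ((b = 0 ∧ G.biE O = ∅ ∧ G.TotCyc S O) ∨ (b = 1 ∧ G.Rooted1 S O))

/-- `O` is a `b`-orientation on `G − S` (exactly `b` bioriented edges; by
convention the empty orientation on a one-vertex edgeless graph counts as a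
`1`-orientation). -/
def IsbOr (S : Finset ℕ) (b : ℕ) (O : Orient) : Prop :=
  G.IsOrientOn S O ∧
    ((G.biE O).card = b ∨ (G.E \ S = ∅ ∧ G.V.card = 1 ∧ b = 1))

/-! ### Posets of orientations on spanning subgraphs -/

/-- The order of `𝒪𝒫^b_G` on pairs `(S, O_S)`:  `(S,O_S) ≤ (T,O_T)` iff
`T ⊆ S` and the restriction of `O_T` to `G − S` is `O_S`. -/
def leOP (p q : Finset ℕ × Orient) : Prop :=
  q.1 ⊆ p.1 ∧ restr q.2 (G.E \ p.1) = p.2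

/-- The order of `𝒪̄𝒫^b_G` on pairs (representing classes): `(S,O̅_S) ≤ (T,O̅_T)`
iff `T ⊆ S` and some representative of `O̅_T` restricts on `G − S` to some
representative of `O̅_S`. -/
noncomputable def leOPbar (b : ℕ) (p q : Finset ℕ × Orient) : Prop :=
  q.1 ⊆ p.1 ∧ ∃ O', G.equivOr q.1 b O' q.2 ∧
    G.equivOr p.1 b (restr O' (G.E \ p.1)) p.2

/-- Equality in `𝒪̄𝒫^b_G`: same subgraph and equivalent orientations. -/
noncomputable def eqOP (b : ℕ) (p q : Finset ℕ × Orient) : Prop :=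
  p.1 = q.1 ∧ G.equivOr p.1 b p.2 q.2

/-- Membership in `𝒪𝒫^b_G`. -/
def POb (b : ℕ) (p : Finset ℕ × Orient) : Prop :=
  G.Ab b p.1 ∧ G.MemOb p.1 b p.2

/-! ### Stable divisors -/

/-- Stable divisors on `G − S` of degree `g(G−S) − c(G−S) + b` (`b = 0, 1`):
for `b = 1`, `G − S` is connected, the degree is `g(G−S)` and
`|d_Z| > g(Z) − 1` for every `Z ⊆ V`; for `b = 0`, the restriction of `d` to
every connected component `W` of `G − S` has degree `g(W) − 1` and satisfies
`|d_Z| > g(Z) − 1` for every `∅ ≠ Z ⊊ W`. -/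
noncomputable def StableDiv (S : Finset ℕ) (b : ℕ) (d : ℕ → ℤ) : Prop :=
  (∀ v, v ∉ G.V → d v = 0) ∧
  ((b = 1 ∧ G.ConnSub G.V (G.E \ S) ∧
      (∑ v ∈ G.V, d v) = G.subGenus G.V (G.E \ S) ∧
      ∀ Z ⊆ G.V, G.subGenus Z (G.indEdges S Z) - 1 < ∑ v ∈ Z, d v) ∨
   (b = 0 ∧ ∀ W, G.IsCompOf S W →
      (∑ v ∈ W, d v) = G.subGenus W (G.indEdges S W) - 1 ∧
      ∀ Z ⊆ W, Z.Nonempty → Z ≠ W →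
        G.subGenus Z (G.indEdges S Z) - 1 < ∑ v ∈ Z, d v))

/-! ### Contractions -/

/-- The relation identifying the two ends of each edge in `S₀`. -/
def conRel (S₀ : Finset ℕ) (u v : ℕ) : Prop :=
  ∃ e ∈ S₀ ∩ G.E, G.ends e = (u, v) ∨ G.ends e = (v, u)

/-- Representative (the least element) of the class of `v` under the
equivalence generated by identifying the ends of the edges in `S₀`. -/
noncomputable def crep (S₀ : Finset ℕ) (v : ℕ) : ℕ :=
  sInf {u | Relation.EqvGen (G.conRel S₀) u v}

/-- The (weighted) edge contraction `G/S₀`: every connected component of the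
subgraph spanned by `S₀` is contracted to a single vertex, whose weight is the
genus of that component; `E(G/S₀) = E(G) \ S₀`. -/
noncomputable def contract (S₀ : Finset ℕ) : MGraph where
  V := G.V.image (G.crep S₀)
  E := G.E \ S₀
  ends := fun e => (G.crep S₀ (G.ends e).1, G.crep S₀ (G.ends e).2)
  w := fun v =>
    (G.subGenus (G.V.filter fun u => G.crep S₀ u = v)
      (G.indEdges (G.E \ S₀) (G.V.filter fun u => G.crep S₀ u = v))).toNat
  ends_mem := by
    intro e he
    rw [Finset.mem_sdiff] at he
    exact ⟨Finset.mem_image_of_mem _ (G.ends_mem e he.1).1,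
           Finset.mem_image_of_mem _ (G.ends_mem e he.1).2⟩

/-- Deletion of the edges in `T` (a spanning subgraph, as a graph). -/
def ddel (T : Finset ℕ) : MGraph where
  V := G.V
  E := G.E \ T
  ends := G.ends
  w := G.w
  ends_mem := fun e he => G.ends_mem e (Finset.mem_sdiff.mp he).1

/-- Pullback `γ* T` of an edge set along the contraction `γ : G → G/S₀`:
`T ∪ (G−T)_br` for `b = 0`, and `T` for `b = 1`. -/
noncomputable def pullStar (b : ℕ) (T : Finset ℕ) : Finset ℕ :=
  if b = 0 then T ∪ G.bridges T else T

/-- Pushforward of a divisor along the contraction `γ : G → G/S₀`: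
`(γ_* d)_v = ∑_{z ∈ γ⁻¹(v)} d_z`. -/
noncomputable def pushDiv (S₀ : Finset ℕ) (d : ℕ → ℤ) : ℕ → ℤ :=
  fun v => ∑ z ∈ G.V.filter (fun u => G.crep S₀ u = v), d z

/-- The divisor `c^{γ,S}` on `G/S₀`: `c^{γ,S}_v = #{e ∈ S₀ ∩ S : γ(e) = v}`. -/
noncomputable def cGamma (S₀ S : Finset ℕ) : ℕ → ℤ :=
  fun v => ((((S₀ ∩ S) ∩ G.E).filter (fun e => G.crep S₀ (G.ends e).1 = v)).card : ℤ)

/-- The relation "`q` is a value of `γ̄_*` at `p`" for the contraction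
`γ : G → G/S₀` acting on classes of orientations: `q` is the restriction to
`(G/S₀) − γ_* S` of a representative of the class of `p` having no bioriented
edge in `S₀` (when `(G/S₀) − γ_*S` has no edges, any representative serves). -/
noncomputable def pushRel (S₀ : Finset ℕ) (b : ℕ) (p q : Finset ℕ × Orient) : Prop :=
  ∃ O', G.equivOr p.1 b O' p.2 ∧
    ((∀ e ∈ S₀, O' e ≠ some EdgeDir.bi) ∨ G.E \ (S₀ ∪ p.1) = ∅) ∧
    q.1 = p.1 \ S₀ ∧ q.2 = restr O' (G.E \ (S₀ ∪ p.1))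

/-! ### Isomorphisms and directed reachability -/

/-- `(fV, fE)` is an isomorphism from `G` to `H`. -/
def IsoMaps (H : MGraph) (fV fE : ℕ → ℕ) : Prop :=
  Set.BijOn fV ↑G.V ↑H.V ∧ Set.BijOn fE ↑G.E ↑H.E ∧
  (∀ e ∈ G.E, H.ends (fE e) = (fV (G.ends e).1, fV (G.ends e).2) ∨
              H.ends (fE e) = (fV (G.ends e).2, fV (G.ends e).1)) ∧
  (∀ v ∈ G.V, H.w (fV v) = G.w v)

/-- `G` and `H` are isomorphic graphs. -/
def Iso (H : MGraph) : Prop := ∃ fV fE, G.IsoMaps H fV fE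

/-- The edge-contraction relation: `G ≤ H` iff `H = G/S₀` (up to isomorphism)
for some `S₀ ⊆ E(G)`. -/
noncomputable def contractLE (H : MGraph) : Prop :=
  ∃ S₀ ⊆ G.E, (G.contract S₀).Iso H

/-- One step from `u` to `v` along an `O`-directed edge (a bioriented edge may
be traversed in both directions). -/
def dirStep (O : Orient) (u v : ℕ) : Prop :=
  ∃ e ∈ G.E,
    (O e = some EdgeDir.fwd ∧ G.ends e = (u, v)) ∨
    (O e = some EdgeDir.bwd ∧ G.ends e = (v, u)) ∨
    (O e = some EdgeDir.bi ∧ (G.ends e = (u, v) ∨ G.ends e = (v, u)))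

/-- There is an `O`-directed path from the (bioriented) edge `e` to the
vertex `v`: a directed path starting at one of the ends of `e` and ending
at `v`. -/
def dirReachFromEdge (O : Orient) (e v : ℕ) : Prop :=
  ∃ u, ((G.ends e).1 = u ∨ (G.ends e).2 = u) ∧
    Relation.ReflTransGen (G.dirStep O) u v

end MGraph

/-! ### Generic poset gadgets (for sets with an order, modulo an equivalence) -/

/-- `le` is a partial order on `{a | P a}` modulo the identification `eqv`. -/
def IsPartialOrderOnMod {α : Type*} (P : α → Prop) (eqv le : α → α → Prop) : Prop :=
  (∀ a, P a → le a a) ∧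
  (∀ a b c, P a → P b → P c → le a b → le b c → le a c) ∧
  (∀ a b, P a → P b → le a b → le b a → eqv a b)

/-- `le` is a partial order on `{a | P a}`. -/
def IsPartialOrderOn {α : Type*} (P : α → Prop) (le : α → α → Prop) : Prop :=
  IsPartialOrderOnMod P (· = ·) le

/-- `a'` covers `a` in `{a | P a}` ordered by `le`, modulo `eqv`. -/
def CoversOnMod {α : Type*} (P : α → Prop) (eqv le : α → α → Prop) (a a' : α) : Prop :=
  P a ∧ P a' ∧ le a a' ∧ ¬ eqv a a' ∧
    ∀ c, P c → le a c → le c a' → (eqv c a ∨ eqv c a')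

/-- `ρ` is a rank on `{a | P a}` ordered by `le`, modulo `eqv`:  along every
covering relation it increases by exactly `1`. -/
def IsRankOnMod {α : Type*} (P : α → Prop) (eqv le : α → α → Prop) (ρ : α → ℕ) : Prop :=
  ∀ a a', CoversOnMod P eqv le a a' → ρ a' = ρ a + 1

/-- `a'` covers `a` in `{a | P a}` ordered by `le`. -/
def CoversOn {α : Type*} (P : α → Prop) (le : α → α → Prop) : α → α → Prop :=
  CoversOnMod P (· = ·) le

/-- `ρ` is a rank on `{a | P a}` ordered by `le`. -/
def IsRankOn {α : Type*} (P : α → Prop) (le : α → α → Prop) (ρ : α → ℕ) : Prop :=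
  IsRankOnMod P (· = ·) le ρ

/-- `f` is a quotient of posets from `({a | P a}, lea)` onto `({b | Q b}, leb)`:
an order-preserving surjection such that any relation downstairs lifts to a
relation upstairs. -/
def IsPosetQuotient {α β : Type*} (P : α → Prop) (Q : β → Prop)
    (lea : α → α → Prop) (leb : β → β → Prop) (f : α → β) : Prop :=
  (∀ a, P a → Q (f a)) ∧
  (∀ a a', P a → P a' → lea a a' → leb (f a) (f a')) ∧
  (∀ b, Q b → ∃ a, P a ∧ f a = b) ∧
  (∀ b b', Q b → Q b' → leb b b' →
    ∃ a a', P a ∧ P a' ∧ f a = b ∧ f a' = b' ∧ lea a a')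

/-! ### Structures over the moduli of stable graphs -/

/-- Pairs `(G, S)` with `G` stable of genus `g` and `S ∈ A^b_G`. -/
noncomputable def PairStab (g b : ℕ) (p : MGraph × Finset ℕ) : Prop :=
  p.1.Stable g ∧ p.1.Ab b p.2

/-- Isomorphism of pairs `(G, S)`. -/
def PairIso (p q : MGraph × Finset ℕ) : Prop :=
  ∃ fV fE, p.1.IsoMaps q.1 fV fE ∧ p.2.image fE = q.2

/-- The order on `A^b_g`: `(G,S) ≤ (H,T)` iff there is a contraction
`γ : G → H` (a contraction of `G` followed by an isomorphism onto `H`) with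
`γ* T ⊆ S`. -/
noncomputable def AgLE (b : ℕ) (p q : MGraph × Finset ℕ) : Prop :=
  ∃ S₀ ⊆ p.1.E, ∃ fV fE, (p.1.contract S₀).IsoMaps q.1 fV fE ∧
    p.1.pullStar b (((p.1.contract S₀).E).filter fun e => fE e ∈ q.2) ⊆ p.2

/-- Triples `(G, S, O̅_S)` with `G` stable of genus `g`, `S ∈ A^b_G` and
`O_S ∈ 𝒪^b(G−S)` (representing elements of `𝒪̄𝒫^b_g`). -/
noncomputable def TripP (g b : ℕ) (x : MGraph × Finset ℕ × Orient) : Prop :=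
  x.1.Stable g ∧ x.1.Ab b x.2.1 ∧ x.1.MemOb x.2.1 b x.2.2

/-- Identification of triples: an isomorphism of the underlying graphs
carrying the subgraph and the class of the orientation (i.e. its divisor) of
one to the other. -/
noncomputable def TripEq (b : ℕ) (x y : MGraph × Finset ℕ × Orient) : Prop :=
  ∃ fV fE, x.1.IsoMaps y.1 fV fE ∧ x.2.1.image fE = y.2.1 ∧
    ∀ v ∈ x.1.V, y.1.divOr y.2.1 b y.2.2 (fV v) = x.1.divOr x.2.1 b x.2.2 v

/-- The order on `𝒪̄𝒫^b_g`: `(G, O̅_S) ≤ (H, O̅_T)` iff there is a contraction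
`γ : G → H` with `γ* T ⊆ S` and `γ̄_* O̅_S ≤ O̅_T`, the latter meaning that the
restriction of `O̅_T` to `H − γ_* S` equals `γ̄_* O̅_S` (compared through the
isomorphism, via the divisors). -/
noncomputable def OPgLE (b : ℕ) (x y : MGraph × Finset ℕ × Orient) : Prop :=
  ∃ S₀ ⊆ x.1.E, ∃ fV fE, (x.1.contract S₀).IsoMaps y.1 fV fE ∧
    x.1.pullStar b (((x.1.contract S₀).E).filter fun e => fE e ∈ y.2.1) ⊆ x.2.1 ∧
    ∃ O', x.1.equivOr x.2.1 b O' x.2.2 ∧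
      ((∀ e ∈ S₀, O' e ≠ some EdgeDir.bi) ∨ x.1.E \ (S₀ ∪ x.2.1) = ∅) ∧
      ∀ v ∈ (x.1.contract S₀).V,
        y.1.divOr ((x.2.1 \ S₀).image fE) b
            (restr y.2.2 (y.1.E \ (x.2.1 \ S₀).image fE)) (fV v)
          = (x.1.contract S₀).divOr (x.2.1 \ S₀) b
              (restr O' (x.1.E \ (S₀ ∪ x.2.1))) v


namespace OPAux

lemma eqvGen_mono {α : Type*} {r r' : α → α → Prop}
    (h : ∀ a b, r a b → Relation.EqvGen r' a b) :
    ∀ {a b}, Relation.EqvGen r a b → Relation.EqvGen r' a b := by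
  intro a b hab
  induction hab with
  | rel x y hxy => exact h x y hxy
  | refl x => exact Relation.EqvGen.refl x
  | symm x y _ ih => exact Relation.EqvGen.symm _ _ ih
  | trans x y z _ _ ih1 ih2 => exact Relation.EqvGen.trans _ _ _ ih1 ih2

lemma eqvGen_pair {α : Type*} {r r' : α → α → Prop} {a b : α}
    (hstep : ∀ x y, r' x y → r x y ∨ (x = a ∧ y = b) ∨ (x = b ∧ y = a)) :
    ∀ {x y}, Relation.EqvGen r' x y →
      Relation.EqvGen r x y ∨
      (Relation.EqvGen r x a ∧ Relation.EqvGen r b y) ∨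
      (Relation.EqvGen r x b ∧ Relation.EqvGen r a y) := by
  intro x y hxy
  induction hxy with
  | rel x y hxy =>
    rcases hstep x y hxy with h | ⟨rfl, rfl⟩ | ⟨rfl, rfl⟩
    · exact Or.inl (Relation.EqvGen.rel _ _ h)
    · exact Or.inr (Or.inl ⟨Relation.EqvGen.refl _, Relation.EqvGen.refl _⟩)
    · exact Or.inr (Or.inr ⟨Relation.EqvGen.refl _, Relation.EqvGen.refl _⟩)
  | refl x => exact Or.inl (Relation.EqvGen.refl x)
  | symm x y _ ih =>
    rcases ih with h | ⟨h1, h2⟩ | ⟨h1, h2⟩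
    · exact Or.inl (Relation.EqvGen.symm _ _ h)
    · exact Or.inr (Or.inr ⟨Relation.EqvGen.symm _ _ h2, Relation.EqvGen.symm _ _ h1⟩)
    · exact Or.inr (Or.inl ⟨Relation.EqvGen.symm _ _ h2, Relation.EqvGen.symm _ _ h1⟩)
  | trans x y z _ _ ih1 ih2 =>
    rcases ih1 with h | ⟨h1, h2⟩ | ⟨h1, h2⟩
    · rcases ih2 with h' | ⟨h1', h2'⟩ | ⟨h1', h2'⟩
      · exact Or.inl (Relation.EqvGen.trans _ _ _ h h')
      · exact Or.inr (Or.inl ⟨Relation.EqvGen.trans _ _ _ h h1', h2'⟩)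
      · exact Or.inr (Or.inr ⟨Relation.EqvGen.trans _ _ _ h h1', h2'⟩)
    · rcases ih2 with h' | ⟨h1', h2'⟩ | ⟨h1', h2'⟩
      · exact Or.inr (Or.inl ⟨h1, Relation.EqvGen.trans _ _ _ h2 h'⟩)
      · exact Or.inr (Or.inl ⟨h1, h2'⟩)
      · exact Or.inl (Relation.EqvGen.trans _ _ _ h1 h2')
    · rcases ih2 with h' | ⟨h1', h2'⟩ | ⟨h1', h2'⟩
      · exact Or.inr (Or.inr ⟨h1, Relation.EqvGen.trans _ _ _ h2 h'⟩)
      · exact Or.inl (Relation.EqvGen.trans _ _ _ h1 h2')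
      · exact Or.inr (Or.inr ⟨h1, h2'⟩)

/-- canonical surjection between `Quot`s of comparable relations -/
noncomputable def quotMap {α : Type*} {r r' : α → α → Prop}
    (h : ∀ a b, r a b → Relation.EqvGen r' a b) : Quot r → Quot r' :=
  Quot.lift (Quot.mk r') (fun a b hab => Quot.eqvGen_sound (h a b hab))

lemma quotMap_surj {α : Type*} {r r' : α → α → Prop}
    (h : ∀ a b, r a b → Relation.EqvGen r' a b) : Function.Surjective (quotMap h) := by
  intro q; induction q using Quot.ind with
  | _ a => exact ⟨Quot.mk r a, rfl⟩

lemma card_quot_le_of_imp {α : Type*} [Finite α] {r r' : α → α → Prop}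
    (h : ∀ a b, r a b → Relation.EqvGen r' a b) :
    Nat.card (Quot r') ≤ Nat.card (Quot r) :=
  Nat.card_le_card_of_surjective _ (quotMap_surj h)

lemma card_quot_lt {α : Type*} [Finite α] {r r' : α → α → Prop}
    (h : ∀ a b, r a b → Relation.EqvGen r' a b)
    (a b : α) (hr' : Relation.EqvGen r' a b) (hr : ¬ Relation.EqvGen r a b) :
    Nat.card (Quot r') < Nat.card (Quot r) := by
  rcases lt_or_eq_of_le (card_quot_le_of_imp h) with hlt | heq
  · exact hlt
  · exfalso
    have hbij : Function.Bijective (quotMap h) :=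
      (Nat.bijective_iff_surjective_and_card _).2 ⟨quotMap_surj h, heq.symm⟩
    have : Quot.mk r a = Quot.mk r b := by
      apply hbij.injective
      show Quot.mk r' a = Quot.mk r' b
      exact Quot.eqvGen_sound hr'
    exact hr (Quot.eq.1 this)

lemma card_quot_le_succ {α : Type*} [Finite α] {r r' : α → α → Prop} {a b : α}
    (hstep : ∀ x y, r' x y → r x y ∨ (x = a ∧ y = b) ∨ (x = b ∧ y = a))
    (hsub : ∀ x y, r x y → Relation.EqvGen r' x y) :
    Nat.card (Quot r) ≤ Nat.card (Quot r') + 1 := by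
  classical
  set f := quotMap hsub with hf
  -- f is injective away from the class of a
  have hinj : ∀ q₁ q₂ : Quot r, q₁ ≠ Quot.mk r a → f q₁ = f q₂ → q₁ = q₂ ∨ q₂ = Quot.mk r a := by
    intro q₁ q₂ hq1 hfq
    induction q₁ using Quot.ind with
    | _ x =>
    induction q₂ using Quot.ind with
    | _ y =>
    have : Relation.EqvGen r' x y := Quot.eq.1 hfq
    rcases eqvGen_pair hstep this with h | ⟨h1, h2⟩ | ⟨h1, h2⟩
    · exact Or.inl (Quot.eqvGen_sound h)
    · exact absurd (Quot.eqvGen_sound h1) hq1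
    · exact Or.inr (Quot.eqvGen_sound ((Relation.EqvGen.symm _ _ h2).trans _ _ _
        (Relation.EqvGen.refl _)))
  -- count
  have hfin : Finite (Quot r) := Quot.finite r
  have hfin' : Finite (Quot r') := Quot.finite r'
  let g : {q : Quot r // q ≠ Quot.mk r a} → Quot r' := fun q => f q.1
  have hg : Function.Injective g := by
    intro q₁ q₂ hgq
    rcases hinj q₁.1 q₂.1 q₁.2 hgq with h | h
    · exact Subtype.ext h
    · exact absurd h q₂.2
  have h1 : Nat.card {q : Quot r // q ≠ Quot.mk r a} ≤ Nat.card (Quot r') :=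
    Nat.card_le_card_of_injective g hg
  have h2 : Nat.card {q : Quot r // q ≠ Quot.mk r a} = Nat.card (Quot r) - 1 := by
    have fQ : Fintype (Quot r) := Fintype.ofFinite _
    have hone : Fintype.card {q : Quot r // q = Quot.mk r a} = 1 := by
      rw [Fintype.card_eq_one_iff]
      exact ⟨⟨_, rfl⟩, fun p => Subtype.ext p.2⟩
    have := Fintype.card_subtype_compl (fun q : Quot r => q = Quot.mk r a)
    rw [hone] at this
    rw [Nat.card_eq_fintype_card, Nat.card_eq_fintype_card]
    exact this
  have h3 : 1 ≤ Nat.card (Quot r) := by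
    have : Nonempty (Quot r) := ⟨Quot.mk r a⟩
    exact Nat.one_le_iff_ne_zero.2 (Nat.card_ne_zero.2 ⟨this, hfin⟩)
  omega

lemma card_quot_of_no_rel {α : Type*} [Finite α] {r : α → α → Prop}
    (h : ∀ a b, r a b → False) : Nat.card (Quot r) = Nat.card α := by
  have heq : ∀ x y : α, Relation.EqvGen r x y → x = y := by
    intro x y hxy
    induction hxy with
    | rel x y hxy => exact absurd hxy (h x y)
    | refl x => rfl
    | symm x y _ ih => exact ih.symm
    | trans x y z _ _ ih1 ih2 => exact ih1.trans ih2
  have : Function.Bijective (Quot.mk r) := by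
    constructor
    · intro x y hxy
      exact heq x y (Quot.eq.1 hxy)
    · intro q; induction q using Quot.ind with
      | _ a => exact ⟨a, rfl⟩
  exact (Nat.card_eq_of_bijective _ this).symm

lemma card_quot_merge {α : Type*} [Finite α] {r r' : α → α → Prop}
    (h : ∀ a b, r a b → Relation.EqvGen r' a b) {k : ℕ} (x : Fin k → α)
    (hdist : ∀ i j, i ≠ j → ¬ Relation.EqvGen r (x i) (x j))
    (hmerge : ∀ i j, Relation.EqvGen r' (x i) (x j)) :
    Nat.card (Quot r') + (k - 1) ≤ Nat.card (Quot r) := by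
  classical
  rcases Nat.eq_zero_or_pos k with hk | hk
  · simpa [hk] using card_quot_le_of_imp h
  have : Finite (Quot r) := Quot.finite r
  have : Finite (Quot r') := Quot.finite r'
  have fQ : Fintype (Quot r) := Fintype.ofFinite _
  have fQ' : Fintype (Quot r') := Fintype.ofFinite _
  set f := quotMap h with hf
  set A : Finset (Quot r) := Finset.image (fun i => Quot.mk r (x i)) Finset.univ with hA
  have hAcard : A.card = k := by
    rw [hA, Finset.card_image_of_injective _ ?_, Finset.card_univ, Fintype.card_fin]
    intro i j hij
    by_contra hne
    exact hdist i j hne (Quot.eq.1 hij)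
  have himgA : ∀ q ∈ A, f q = f (Quot.mk r (x ⟨0, hk⟩)) := by
    intro q hq
    rw [hA, Finset.mem_image] at hq
    obtain ⟨i, _, rfl⟩ := hq
    show Quot.mk r' (x i) = Quot.mk r' (x ⟨0, hk⟩)
    exact Quot.eqvGen_sound (hmerge i _)
  have hsurj : Finset.univ.image f = (Finset.univ : Finset (Quot r')) := by
    apply Finset.eq_univ_of_forall
    intro q
    obtain ⟨p, hp⟩ := quotMap_surj h q
    exact Finset.mem_image.2 ⟨p, Finset.mem_univ _, hp⟩
  have hsplit : (Finset.univ : Finset (Quot r)) = A ∪ (Finset.univ \ A) := by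
    rw [Finset.union_sdiff_of_subset (Finset.subset_univ _)]
  have hcard' : Fintype.card (Quot r') ≤ 1 + (Fintype.card (Quot r) - k) := by
    calc Fintype.card (Quot r') = (Finset.univ.image f).card := by rw [hsurj, Finset.card_univ]
    _ = ((A ∪ (Finset.univ \ A)).image f).card := by rw [← hsplit]
    _ = (A.image f ∪ (Finset.univ \ A).image f).card := by rw [Finset.image_union]
    _ ≤ (A.image f).card + ((Finset.univ \ A).image f).card := Finset.card_union_le _ _
    _ ≤ 1 + ((Finset.univ \ A).image f).card := by
        gcongr
        apply Finset.card_le_one.2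
        intro p hp q hq
        rw [Finset.mem_image] at hp hq
        obtain ⟨p', hp', rfl⟩ := hp
        obtain ⟨q', hq', rfl⟩ := hq
        rw [himgA p' hp', himgA q' hq']
    _ ≤ 1 + (Finset.univ \ A).card := by gcongr; exact Finset.card_image_le
    _ = 1 + (Fintype.card (Quot r) - k) := by
        rw [Finset.card_sdiff_of_subset (Finset.subset_univ _), Finset.card_univ, hAcard]
  have hk' : k ≤ Fintype.card (Quot r) := by
    calc k = A.card := hAcard.symm
    _ ≤ Fintype.card (Quot r) := Finset.card_le_univ _
  rw [Nat.card_eq_fintype_card, Nat.card_eq_fintype_card]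
  omega

end OPAux

namespace MGraph

variable (G : MGraph)

lemma adjOn_mem_V {F : Finset ℕ} {u v : ℕ} (h : G.adjOn F u v) : u ∈ G.V ∧ v ∈ G.V := by
  obtain ⟨e, he, hends⟩ := h
  have hE : e ∈ G.E := (Finset.mem_inter.1 he).2
  have hm := G.ends_mem e hE
  rcases hends with h' | h' <;> rw [h'] at hm
  · exact hm
  · exact ⟨hm.2, hm.1⟩

lemma adjOn_symm {F : Finset ℕ} {u v : ℕ} (h : G.adjOn F u v) : G.adjOn F v u := by
  obtain ⟨e, he, hends⟩ := h
  exact ⟨e, he, hends.symm⟩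

lemma adjOn_of_edge {F : Finset ℕ} {e : ℕ} (heF : e ∈ F) (heE : e ∈ G.E) :
    G.adjOn F (G.ends e).1 (G.ends e).2 :=
  ⟨e, Finset.mem_inter.2 ⟨heF, heE⟩, Or.inl rfl⟩

lemma adjOn_mono {F F' : Finset ℕ} (hFF : F ⊆ F') {u v : ℕ} (h : G.adjOn F u v) :
    G.adjOn F' u v := by
  obtain ⟨e, he, hends⟩ := h
  rw [Finset.mem_inter] at he
  exact ⟨e, Finset.mem_inter.2 ⟨hFF he.1, he.2⟩, hends⟩

/-- endpoints of an `EqvGen (adjOn)` chain are equal, or both in `V`. -/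
lemma eqvGen_adjOn_cases {F : Finset ℕ} {x y : ℕ}
    (h : Relation.EqvGen (G.adjOn F) x y) : x = y ∨ (x ∈ G.V ∧ y ∈ G.V) := by
  induction h with
  | rel x y hxy => exact Or.inr (G.adjOn_mem_V hxy)
  | refl x => exact Or.inl rfl
  | symm x y _ ih => rcases ih with h | h; exacts [Or.inl h.symm, Or.inr ⟨h.2, h.1⟩]
  | trans x y z _ _ ih1 ih2 =>
    rcases ih1 with h1 | h1
    · rw [h1]; exact ih2
    · rcases ih2 with h2 | h2
      · rw [← h2]; exact Or.inr h1
      · exact Or.inr ⟨h1.1, h2.2⟩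

/-- helper for the subtype transfer -/
lemma eqvGen_subtype_of {F : Finset ℕ} {a b : ℕ} (h : Relation.EqvGen (G.adjOn F) a b) :
    ∀ (ha : a ∈ G.V) (hb : b ∈ G.V),
      Relation.EqvGen (fun u v : {x : ℕ // x ∈ G.V} => G.adjOn F u.1 v.1) ⟨a, ha⟩ ⟨b, hb⟩ := by
  induction h with
  | rel x y hxy => intro hx hy; exact Relation.EqvGen.rel _ _ hxy
  | refl x => intro hx hy; exact Relation.EqvGen.refl _
  | symm x y _ ih => intro hx hy; exact Relation.EqvGen.symm _ _ (ih hy hx)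
  | trans x c y hxc _ ih1 ih2 =>
    intro hx hy
    rcases G.eqvGen_adjOn_cases hxc with heq | ⟨_, hc⟩
    · subst heq; exact ih2 hx hy
    · exact Relation.EqvGen.trans _ _ _ (ih1 hx hc) (ih2 hc hy)

/-- transfer between the subtype relation used in `ncomp` and the ℕ-level relation. -/
lemma eqvGen_subtype_iff {F : Finset ℕ} (u v : {x : ℕ // x ∈ G.V}) :
    Relation.EqvGen (fun a b : {x : ℕ // x ∈ G.V} => G.adjOn F a.1 b.1) u v ↔
      Relation.EqvGen (G.adjOn F) u.1 v.1 := by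
  constructor
  · intro h
    induction h with
    | rel x y hxy => exact Relation.EqvGen.rel _ _ hxy
    | refl x => exact Relation.EqvGen.refl _
    | symm x y _ ih => exact Relation.EqvGen.symm _ _ ih
    | trans x y z _ _ ih1 ih2 => exact Relation.EqvGen.trans _ _ _ ih1 ih2
  · intro h
    obtain ⟨x, hx⟩ := u
    obtain ⟨y, hy⟩ := v
    exact G.eqvGen_subtype_of h hx hy

lemma ncomp_le_of_imp {F F' : Finset ℕ}
    (h : ∀ u v, G.adjOn F u v → Relation.EqvGen (G.adjOn F') u v) :
    G.ncomp G.V F' ≤ G.ncomp G.V F := by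
  apply OPAux.card_quot_le_of_imp
  intro a b hab
  exact (G.eqvGen_subtype_iff a b).2 (h a.1 b.1 hab)

lemma ncomp_mono {F F' : Finset ℕ} (hFF : F ⊆ F') :
    G.ncomp G.V F' ≤ G.ncomp G.V F :=
  G.ncomp_le_of_imp fun u v h => Relation.EqvGen.rel _ _ (G.adjOn_mono hFF h)

lemma ncomp_lt_of {F F' : Finset ℕ}
    (hsub : ∀ u v, G.adjOn F' u v → Relation.EqvGen (G.adjOn F) u v)
    {x y : ℕ} (hx : x ∈ G.V) (hy : y ∈ G.V)
    (hxy : Relation.EqvGen (G.adjOn F) x y)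
    (hnot : ¬ Relation.EqvGen (G.adjOn F') x y) :
    G.ncomp G.V F < G.ncomp G.V F' := by
  apply OPAux.card_quot_lt (r := fun a b : {t : ℕ // t ∈ G.V} => G.adjOn F' a.1 b.1)
    (fun a b hab => (G.eqvGen_subtype_iff a b).2 (hsub a.1 b.1 hab))
    ⟨x, hx⟩ ⟨y, hy⟩ ((G.eqvGen_subtype_iff _ _).2 hxy)
  intro hcon
  exact hnot ((G.eqvGen_subtype_iff _ _).1 hcon)

lemma ncomp_eq_one_iff {F : Finset ℕ} :
    G.ncomp G.V F = 1 ↔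
      (G.V.Nonempty ∧ ∀ u ∈ G.V, ∀ v ∈ G.V, Relation.EqvGen (G.adjOn F) u v) := by
  show Nat.card (Quot _) = 1 ↔ _
  rw [Nat.card_eq_one_iff_unique]
  constructor
  · rintro ⟨hsub, ⟨q⟩⟩
    obtain ⟨a, _⟩ := q.exists_rep
    refine ⟨⟨a.1, a.2⟩, ?_⟩
    intro u hu v hv
    have : Quot.mk _ (⟨u, hu⟩ : {x : ℕ // x ∈ G.V}) = Quot.mk _ (⟨v, hv⟩ : {x : ℕ // x ∈ G.V}) :=
      hsub.elim _ _
    exact (G.eqvGen_subtype_iff _ _).1 (Quot.eq.1 this)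
  · rintro ⟨⟨v0, hv0⟩, hall⟩
    constructor
    · constructor
      intro p q
      induction p using Quot.ind with
      | _ a =>
      induction q using Quot.ind with
      | _ b =>
      exact Quot.eqvGen_sound ((G.eqvGen_subtype_iff a b).2 (hall a.1 a.2 b.1 b.2))
    · exact ⟨Quot.mk _ ⟨v0, hv0⟩⟩

lemma ncomp_eq_card_of_no_edges {F : Finset ℕ} (h : F ∩ G.E = ∅) :
    G.ncomp G.V F = G.V.card := by
  have : ∀ a b : {x : ℕ // x ∈ G.V}, G.adjOn F a.1 b.1 → False := by
    rintro a b ⟨e, he, _⟩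
    rw [h] at he
    exact absurd he (Finset.notMem_empty e)
  rw [show G.ncomp G.V F = Nat.card (Quot _) from rfl, OPAux.card_quot_of_no_rel this,
    Nat.card_eq_fintype_card, Fintype.card_coe]

lemma ncomp_pos {F : Finset ℕ} (h : G.V.Nonempty) : 0 < G.ncomp G.V F := by
  obtain ⟨v, hv⟩ := h
  have : Nonempty (Quot (fun a b : {x : ℕ // x ∈ G.V} => G.adjOn F a.1 b.1)) :=
    ⟨Quot.mk _ ⟨v, hv⟩⟩
  exact Nat.card_pos

lemma ncomp_one_of_card_one {F : Finset ℕ} (h : G.V.card = 1) : G.ncomp G.V F = 1 := by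
  obtain ⟨v, hv⟩ := Finset.card_eq_one.1 h
  rw [G.ncomp_eq_one_iff]
  rw [hv]
  refine ⟨⟨v, Finset.mem_singleton_self v⟩, ?_⟩
  intro u hu w hw
  rw [Finset.mem_singleton] at hu hw
  subst hu; subst hw
  exact Relation.EqvGen.refl _

lemma ncomp_erase_le (F : Finset ℕ) (e : ℕ) :
    G.ncomp G.V (F.erase e) ≤ G.ncomp G.V F + 1 := by
  by_cases he : e ∈ F ∩ G.E
  · rw [Finset.mem_inter] at he
    have h1 : (G.ends e).1 ∈ G.V := (G.ends_mem e he.2).1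
    have h2 : (G.ends e).2 ∈ G.V := (G.ends_mem e he.2).2
    apply OPAux.card_quot_le_succ (a := (⟨(G.ends e).1, h1⟩ : {x : ℕ // x ∈ G.V}))
      (b := (⟨(G.ends e).2, h2⟩ : {x : ℕ // x ∈ G.V}))
    · rintro x y ⟨g, hg, hends⟩
      rw [Finset.mem_inter] at hg
      by_cases hge : g = e
      · subst hge
        rcases hends with h' | h'
        · refine Or.inr (Or.inl ⟨?_, ?_⟩) <;> apply Subtype.ext <;> simp [h']
        · refine Or.inr (Or.inr ⟨?_, ?_⟩) <;> apply Subtype.ext <;> simp [h']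
      · exact Or.inl ⟨g, Finset.mem_inter.2 ⟨Finset.mem_erase.2 ⟨hge, hg.1⟩, hg.2⟩, hends⟩
    · intro x y hxy
      exact Relation.EqvGen.rel _ _ (G.adjOn_mono (Finset.erase_subset _ _) hxy)
  · have hiff : ∀ u v, G.adjOn (F.erase e) u v ↔ G.adjOn F u v := by
      intro u v
      constructor
      · exact G.adjOn_mono (Finset.erase_subset _ _)
      · rintro ⟨g, hg, hends⟩
        rw [Finset.mem_inter] at hg
        have hge : g ≠ e := by rintro rfl; exact he (Finset.mem_inter.2 hg)
        exact ⟨g, Finset.mem_inter.2 ⟨Finset.mem_erase.2 ⟨hge, hg.1⟩, hg.2⟩, hends⟩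
    have := G.ncomp_le_of_imp (F := F) (F' := F.erase e)
      (fun u v h => Relation.EqvGen.rel _ _ ((hiff u v).2 h))
    omega

lemma ncomp_sdiff_le (F K : Finset ℕ) :
    G.ncomp G.V (F \ K) ≤ G.ncomp G.V F + K.card := by
  classical
  induction K using Finset.induction_on with
  | empty => simp
  | @insert k K hk ih =>
    have h1 : F \ insert k K = (F \ K).erase k := by
      ext x
      simp [Finset.mem_sdiff, Finset.mem_erase, Finset.mem_insert]
      tauto
    rw [h1, Finset.card_insert_of_notMem hk]
    have := G.ncomp_erase_le (F \ K) k
    omega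

lemma card_V_le (F : Finset ℕ) : G.V.card ≤ (F ∩ G.E).card + G.ncomp G.V F := by
  classical
  generalize hn : (F ∩ G.E).card = n
  induction n using Nat.strong_induction_on generalizing F with
  | _ n ih =>
    rcases Nat.eq_zero_or_pos n with h0 | hpos
    · subst h0
      rw [Finset.card_eq_zero] at hn
      rw [G.ncomp_eq_card_of_no_edges hn]
      omega
    · have hne : (F ∩ G.E).Nonempty := by
        rw [← Finset.card_pos, hn]; exact hpos
      obtain ⟨e, he⟩ := hne
      have hcard : ((F.erase e) ∩ G.E).card = n - 1 := by
        rw [Finset.erase_inter, Finset.card_erase_of_mem he, hn]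
      have hrec := ih (n - 1) (by omega) (F.erase e) hcard
      have := G.ncomp_erase_le F e
      omega

lemma cross_of_eqvGen {F : Finset ℕ} {Z : Set ℕ} {u v : ℕ}
    (h : Relation.EqvGen (G.adjOn F) u v) :
    ((u ∈ Z ∧ v ∉ Z) ∨ (u ∉ Z ∧ v ∈ Z)) →
    ∃ e ∈ F ∩ G.E,
      ((G.ends e).1 ∈ Z ∧ (G.ends e).2 ∉ Z) ∨ ((G.ends e).1 ∉ Z ∧ (G.ends e).2 ∈ Z) := by
  induction h with
  | rel x y hxy =>
    intro hp
    obtain ⟨e, he, hends⟩ := hxy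
    refine ⟨e, he, ?_⟩
    rcases hends with h' | h' <;> rw [h'] <;> tauto
  | refl x => intro hp; tauto
  | symm x y _ ih => intro hp; exact ih (by tauto)
  | trans x y z _ _ ih1 ih2 =>
    intro hp
    by_cases hy : y ∈ Z
    · rcases hp with ⟨hx, hz⟩ | ⟨hx, hz⟩
      · exact ih2 (Or.inl ⟨hy, hz⟩)
      · exact ih1 (Or.inr ⟨hx, hy⟩)
    · rcases hp with ⟨hx, hz⟩ | ⟨hx, hz⟩
      · exact ih1 (Or.inl ⟨hx, hy⟩)
      · exact ih2 (Or.inr ⟨hy, hz⟩)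

lemma mem_iff_of_no_cut {S : Finset ℕ} {Z : Finset ℕ} (hcut : G.cutEdges S Z = ∅)
    {u v : ℕ} (h : Relation.EqvGen (G.adjOn (G.E \ S)) u v) : u ∈ Z ↔ v ∈ Z := by
  by_contra hcon
  have hp : (u ∈ (↑Z : Set ℕ) ∧ v ∉ (↑Z : Set ℕ)) ∨ (u ∉ (↑Z : Set ℕ) ∧ v ∈ (↑Z : Set ℕ)) := by
    simp only [Finset.mem_coe]; tauto
  obtain ⟨e, he, hpat⟩ := G.cross_of_eqvGen h hp
  have heE : e ∈ G.E \ S := by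
    rw [Finset.inter_eq_left.2 (Finset.sdiff_subset)] at he; exact he
  have : e ∈ G.cutEdges S Z := by
    rw [MGraph.cutEdges, Finset.mem_filter]
    simp only [Finset.mem_coe] at hpat
    exact ⟨heE, hpat⟩
  rw [hcut] at this
  exact absurd this (Finset.notMem_empty e)

/-- canonical representative of the component of `v` in `G − S`. -/
noncomputable def compRep (S : Finset ℕ) (v : ℕ) : ℕ :=
  sInf {u | Relation.EqvGen (G.adjOn (G.E \ S)) u v}

lemma compRep_spec (S : Finset ℕ) (v : ℕ) :
    Relation.EqvGen (G.adjOn (G.E \ S)) (G.compRep S v) v :=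
  Nat.sInf_mem (⟨v, Relation.EqvGen.refl v⟩ : {u | Relation.EqvGen (G.adjOn (G.E \ S)) u v}.Nonempty)

lemma compRep_eq_iff {S : Finset ℕ} {u v : ℕ} :
    G.compRep S u = G.compRep S v ↔ Relation.EqvGen (G.adjOn (G.E \ S)) u v := by
  constructor
  · intro h
    have h1 := G.compRep_spec S u
    have h2 := G.compRep_spec S v
    rw [h] at h1
    exact Relation.EqvGen.trans _ _ _ (Relation.EqvGen.symm _ _ h1) h2
  · intro h
    unfold compRep
    congr 1
    ext x
    exact ⟨fun hx => Relation.EqvGen.trans _ _ _ hx h,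
      fun hx => Relation.EqvGen.trans _ _ _ hx (Relation.EqvGen.symm _ _ h)⟩

lemma sdiff_insert_eq_erase (E S : Finset ℕ) (e : ℕ) :
    E \ insert e S = (E \ S).erase e := by
  ext x; simp [Finset.mem_sdiff, Finset.mem_erase, Finset.mem_insert]; tauto

lemma exists_cut_of_bridge {S : Finset ℕ} {e : ℕ} (h : G.IsBridge S e) :
    ∃ Z : Finset ℕ, Z ⊆ G.V ∧ Z.Nonempty ∧ Z ≠ G.V ∧ G.cutEdges S Z = {e} := by
  obtain ⟨heE, hlt⟩ := h
  have hx : (G.ends e).1 ∈ G.V := (G.ends_mem e (Finset.mem_sdiff.1 heE).1).1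
  have hy : (G.ends e).2 ∈ G.V := (G.ends_mem e (Finset.mem_sdiff.1 heE).1).2
  set x := (G.ends e).1
  set y := (G.ends e).2
  rw [sdiff_insert_eq_erase] at hlt
  have hnc : ¬ Relation.EqvGen (G.adjOn ((G.E \ S).erase e)) x y := by
    intro hcon
    have hle : G.ncomp G.V ((G.E \ S).erase e) ≤ G.ncomp G.V (G.E \ S) := by
      apply G.ncomp_le_of_imp
      rintro u v ⟨g, hg, hends⟩
      rw [Finset.mem_inter] at hg
      by_cases hge : g = e
      · subst hge
        rcases hends with h' | h'
        · have hux : x = u := congrArg Prod.fst h'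
          have hvy : y = v := congrArg Prod.snd h'
          rw [← hux, ← hvy]; exact hcon
        · have hux : x = v := congrArg Prod.fst h'
          have hvy : y = u := congrArg Prod.snd h'
          rw [← hux, ← hvy]; exact Relation.EqvGen.symm _ _ hcon
      · exact Relation.EqvGen.rel _ _
          ⟨g, Finset.mem_inter.2 ⟨Finset.mem_erase.2 ⟨hge, hg.1⟩, hg.2⟩, hends⟩
    omega
  refine ⟨G.V.filter (fun w => Relation.EqvGen (G.adjOn ((G.E \ S).erase e)) x w), ?_, ?_, ?_, ?_⟩
  · exact Finset.filter_subset _ _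
  · exact ⟨x, Finset.mem_filter.2 ⟨hx, Relation.EqvGen.refl x⟩⟩
  · intro hcon
    have : y ∈ G.V.filter (fun w => Relation.EqvGen (G.adjOn ((G.E \ S).erase e)) x w) := by
      rw [hcon]; exact hy
    exact hnc (Finset.mem_filter.1 this).2
  · ext f
    rw [MGraph.cutEdges, Finset.mem_filter, Finset.mem_singleton]
    constructor
    · rintro ⟨hfE, hpat⟩
      by_contra hfe
      -- f ≠ e crosses the component of x : impossible
      have hstep : ∀ u v, G.adjOn ((G.E \ S).erase e) u v →
          (Relation.EqvGen (G.adjOn ((G.E \ S).erase e)) x u ↔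
           Relation.EqvGen (G.adjOn ((G.E \ S).erase e)) x v) := by
        intro u v huv
        constructor
        · intro h1; exact Relation.EqvGen.trans _ _ _ h1 (Relation.EqvGen.rel _ _ huv)
        · intro h1; exact Relation.EqvGen.trans _ _ _ h1
            (Relation.EqvGen.symm _ _ (Relation.EqvGen.rel _ _ huv))
      have hadj : G.adjOn ((G.E \ S).erase e) (G.ends f).1 (G.ends f).2 := by
        refine ⟨f, Finset.mem_inter.2 ⟨Finset.mem_erase.2 ⟨hfe, hfE⟩, (Finset.mem_sdiff.1 hfE).1⟩,
          Or.inl rfl⟩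
      have hiff := hstep _ _ hadj
      have h1 : (G.ends f).1 ∈ G.V := (G.ends_mem f (Finset.mem_sdiff.1 hfE).1).1
      have h2 : (G.ends f).2 ∈ G.V := (G.ends_mem f (Finset.mem_sdiff.1 hfE).1).2
      rcases hpat with ⟨ha, hb⟩ | ⟨ha, hb⟩
      · rw [Finset.mem_filter] at ha
        exact hb (Finset.mem_filter.2 ⟨h2, hiff.1 ha.2⟩)
      · rw [Finset.mem_filter] at hb
        exact ha (Finset.mem_filter.2 ⟨h1, hiff.2 hb.2⟩)
    · rintro rfl
      refine ⟨heE, Or.inl ⟨Finset.mem_filter.2 ⟨hx, Relation.EqvGen.refl x⟩, ?_⟩⟩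
      intro hcon
      exact hnc (Finset.mem_filter.1 hcon).2

lemma bridge_of_singleton_cut {T : Finset ℕ} {f : ℕ} (hf : f ∈ G.E \ T) {Z : Set ℕ}
    (hcross : ((G.ends f).1 ∈ Z ∧ (G.ends f).2 ∉ Z) ∨ ((G.ends f).1 ∉ Z ∧ (G.ends f).2 ∈ Z))
    (honly : ∀ g ∈ G.E \ T, g ≠ f →
      ¬(((G.ends g).1 ∈ Z ∧ (G.ends g).2 ∉ Z) ∨ ((G.ends g).1 ∉ Z ∧ (G.ends g).2 ∈ Z))) :
    G.IsBridge T f := by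
  have hfE : f ∈ G.E := (Finset.mem_sdiff.1 hf).1
  have hx : (G.ends f).1 ∈ G.V := (G.ends_mem f hfE).1
  have hy : (G.ends f).2 ∈ G.V := (G.ends_mem f hfE).2
  refine ⟨hf, ?_⟩
  rw [sdiff_insert_eq_erase]
  apply G.ncomp_lt_of (x := (G.ends f).1) (y := (G.ends f).2)
  · intro u v h
    exact Relation.EqvGen.rel _ _ (G.adjOn_mono (Finset.erase_subset _ _) h)
  · exact hx
  · exact hy
  · exact Relation.EqvGen.rel _ _ (G.adjOn_of_edge hf hfE)
  · intro hcon
    obtain ⟨g, hg, hpat⟩ := G.cross_of_eqvGen hcon hcross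
    rw [Finset.mem_inter] at hg
    have hgne : g ≠ f := by
      intro hge; subst hge
      exact (Finset.mem_erase.1 hg.1).1 rfl
    exact honly g (Finset.erase_subset _ _ hg.1) hgne hpat

lemma no_bridge_of_totcyc {R : Finset ℕ} {O : Orient} (hOr : G.IsOrientOn R O)
    (hbi : G.biE O = ∅) (htc : G.TotCyc R O) : ∀ f, ¬ G.IsBridge R f := by
  intro f hbr
  obtain ⟨Z, hZV, hZne, hZne', hZcut⟩ := G.exists_cut_of_bridge hbr
  have hcut_ne : (G.cutEdges R Z).Nonempty := by rw [hZcut]; exact ⟨f, Finset.mem_singleton_self f⟩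
  obtain ⟨⟨e1, he1, v1, hv1, hd1⟩, ⟨e2, he2, v2, hv2, hd2⟩⟩ := htc Z hZV hZne hZne' hcut_ne
  rw [hZcut, Finset.mem_singleton] at he1 he2
  rw [he1] at hd1
  rw [he2] at hd2
  have hfE : f ∈ G.E \ R := hbr.1
  have hfsome : O f ≠ none := (hOr f).2 hfE
  have hfbi : O f ≠ some EdgeDir.bi := by
    intro hcon
    have : f ∈ G.biE O := Finset.mem_filter.2 ⟨(Finset.mem_sdiff.1 hfE).1, hcon⟩
    rw [hbi] at this
    exact absurd this (Finset.notMem_empty f)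
  have hv2' : v2 ∉ Z := (Finset.mem_sdiff.1 hv2).2
  rcases hOf : O f with _ | d
  · exact hfsome hOf
  rcases d with _ | _ | _
  · rw [hOf] at hd1 hd2
    simp only [dirT] at hd1 hd2
    split at hd1
    · split at hd2
      · rename_i hh1 hh2
        rw [← hh1] at hv1
        rw [← hh2] at hv2'
        exact hv2' hv1
      · omega
    · omega
  · rw [hOf] at hd1 hd2
    simp only [dirT] at hd1 hd2
    split at hd1
    · split at hd2
      · rename_i hh1 hh2
        rw [← hh1] at hv1
        rw [← hh2] at hv2'
        exact hv2' hv1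
      · omega
    · omega
  · exact absurd hOf hfbi

lemma orient_none {S : Finset ℕ} {O : Orient} (hO : G.IsOrientOn S O) {e : ℕ}
    (h : e ∉ G.E \ S) : O e = none := by
  by_contra h'
  exact h ((hO e).1 h')

lemma sum_dirT (o : Option EdgeDir) (p : ℕ × ℕ) (Z : Finset ℕ) :
    ∑ v ∈ Z, dirT o p v =
      (if o = none then 0 else 0) +
      (if o = some EdgeDir.fwd then (if p.2 ∈ Z then 1 else 0) else 0) +
      (if o = some EdgeDir.bwd then (if p.1 ∈ Z then 1 else 0) else 0) +
      (if o = some EdgeDir.bi then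
        (if p.1 ∈ Z then 1 else 0) + (if p.2 ∈ Z then 1 else 0) else 0) := by
  rcases o with _ | d
  · simp [dirT]
  · rcases d with _ | _ | _ <;>
      simp [dirT, Finset.sum_ite_eq, Finset.sum_add_distrib]

lemma tOr_eq_zero_of_not_mem {O : Orient} {v : ℕ} (hv : v ∉ G.V) : G.tOr O v = 0 := by
  unfold tOr
  apply Finset.sum_eq_zero
  intro e he
  have h1 := (G.ends_mem e he).1
  have h2 := (G.ends_mem e he).2
  have hn1 : (G.ends e).1 ≠ v := fun h => hv (h ▸ h1)
  have hn2 : (G.ends e).2 ≠ v := fun h => hv (h ▸ h2)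
  rcases (O e) with _ | d
  · rfl
  · rcases d with _ | _ | _ <;> simp [dirT, hn1, hn2]

lemma tOr_add_eq {O1 O2 O3 O4 : Orient}
    (h : ∀ e ∈ G.E, ∀ v, dirT (O1 e) (G.ends e) v + dirT (O4 e) (G.ends e) v
      = dirT (O2 e) (G.ends e) v + dirT (O3 e) (G.ends e) v) (v : ℕ) :
    G.tOr O1 v + G.tOr O4 v = G.tOr O2 v + G.tOr O3 v := by
  unfold tOr
  rw [← Finset.sum_add_distrib, ← Finset.sum_add_distrib]
  exact Finset.sum_congr rfl (fun e he => h e he v)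

lemma tOr_eq_of_equiv {S : Finset ℕ} {b : ℕ} {O O' : Orient} (h : G.equivOr S b O O') :
    ∀ v, G.tOr O v = G.tOr O' v := by
  intro v
  by_cases hv : v ∈ G.V
  · by_cases hES : G.E \ S = ∅
    · have hz : ∀ (O'' : Orient), G.IsOrientOn S O'' → G.tOr O'' v = 0 := by
        intro O'' hO''
        apply Finset.sum_eq_zero
        intro e he
        have : O'' e = none := G.orient_none hO'' (by rw [hES]; exact Finset.notMem_empty e)
        rw [this]; rfl
      rw [hz O h.1, hz O' h.2.1]
    · have hd := congrFun h.2.2 v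
      unfold divOr at hd
      rw [if_pos hv, if_pos hv, if_neg hES, if_neg hES] at hd
      omega
  · rw [G.tOr_eq_zero_of_not_mem hv, G.tOr_eq_zero_of_not_mem hv]

lemma biE_eq_filter {S : Finset ℕ} {O : Orient} (hO : G.IsOrientOn S O) :
    G.biE O = (G.E \ S).filter (fun e => O e = some EdgeDir.bi) := by
  ext e
  unfold biE
  rw [Finset.mem_filter, Finset.mem_filter]
  constructor
  · rintro ⟨heE, hbi⟩
    have : O e ≠ none := by rw [hbi]; simp
    exact ⟨(hO e).1 this, hbi⟩
  · rintro ⟨heE, hbi⟩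
    exact ⟨(Finset.mem_sdiff.1 heE).1, hbi⟩

lemma sum_tOr (S : Finset ℕ) (O : Orient) (hO : G.IsOrientOn S O) :
    ∑ v ∈ G.V, G.tOr O v = (G.E \ S).card + (G.biE O).card := by
  unfold tOr
  rw [Finset.sum_comm]
  have hper : ∀ e ∈ G.E, ∑ v ∈ G.V, dirT (O e) (G.ends e) v
      = if O e = none then 0 else (if O e = some EdgeDir.bi then 2 else 1) := by
    intro e he
    rw [sum_dirT]
    have h1 : (G.ends e).1 ∈ G.V := (G.ends_mem e he).1
    have h2 : (G.ends e).2 ∈ G.V := (G.ends_mem e he).2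
    rcases hOe : O e with _ | d
    · simp
    · rcases d with _ | _ | _ <;> simp [h1, h2]
  rw [Finset.sum_congr rfl hper]
  have hzero : ∀ e ∈ G.E, e ∉ G.E \ S →
      (if O e = none then 0 else (if O e = some EdgeDir.bi then 2 else 1)) = 0 := by
    intro e heE heS
    rw [G.orient_none hO heS]
    simp
  rw [← Finset.sum_subset (Finset.sdiff_subset : G.E \ S ⊆ G.E) hzero]
  have hone : ∀ e ∈ G.E \ S, (if O e = none then 0 else (if O e = some EdgeDir.bi then 2 else 1))
      = 1 + (if O e = some EdgeDir.bi then 1 else 0) := by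
    intro e he
    have hne : O e ≠ none := (hO e).2 he
    rw [if_neg hne]
    split <;> rfl
  rw [Finset.sum_congr rfl hone, Finset.sum_add_distrib, G.biE_eq_filter hO]
  simp [Finset.sum_boole]

lemma sum_pos_iff {s : Finset ℕ} {f : ℕ → ℕ} : 0 < ∑ x ∈ s, f x ↔ ∃ x ∈ s, 0 < f x := by
  rw [Nat.pos_iff_ne_zero, Ne, Finset.sum_eq_zero_iff]
  push_neg
  simp [Nat.pos_iff_ne_zero]

lemma cut_pos_iff {S : Finset ℕ} {O : Orient} {Z W : Finset ℕ} :
    (∃ e ∈ G.cutEdges S Z, ∃ v ∈ W, 0 < dirT (O e) (G.ends e) v) ↔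
      0 < ∑ e ∈ G.cutEdges S Z, ∑ v ∈ W, dirT (O e) (G.ends e) v := by
  rw [sum_pos_iff]
  constructor
  · rintro ⟨e, he, hv⟩; exact ⟨e, he, sum_pos_iff.2 hv⟩
  · rintro ⟨e, he, hv⟩; exact ⟨e, he, sum_pos_iff.1 hv⟩

lemma sum_tOr_Z {S : Finset ℕ} {O : Orient} (hO : G.IsOrientOn S O) (Z : Finset ℕ) :
    ∑ v ∈ Z, G.tOr O v
      = ((G.indEdges S Z).card
        + ((G.indEdges S Z).filter (fun e => O e = some EdgeDir.bi)).card)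
        + ∑ e ∈ G.cutEdges S Z, ∑ v ∈ Z, dirT (O e) (G.ends e) v := by
  unfold tOr
  rw [Finset.sum_comm]
  have hzero : ∀ e ∈ G.E, e ∉ G.E \ S → ∑ v ∈ Z, dirT (O e) (G.ends e) v = 0 := by
    intro e _ heS
    apply Finset.sum_eq_zero
    intro v _
    rw [G.orient_none hO heS]; rfl
  rw [← Finset.sum_subset (Finset.sdiff_subset : G.E \ S ⊆ G.E) hzero]
  rw [← Finset.sum_filter_add_sum_filter_not (G.E \ S)
    (fun e => (G.ends e).1 ∈ Z ∧ (G.ends e).2 ∈ Z)]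
  have hfeq : (G.E \ S).filter (fun e => (G.ends e).1 ∈ Z ∧ (G.ends e).2 ∈ Z)
      = G.indEdges S Z := rfl
  rw [hfeq]
  congr 1
  · -- internal edges
    have hA : ∀ e ∈ G.indEdges S Z, (∑ v ∈ Z, dirT (O e) (G.ends e) v)
        = 1 + (if O e = some EdgeDir.bi then 1 else 0) := by
      intro e he
      rw [MGraph.indEdges, Finset.mem_filter] at he
      obtain ⟨heES, h1, h2⟩ := he
      have hne := (hO e).2 heES
      rw [sum_dirT]
      rcases hOe : O e with _ | d
      · exact absurd hOe hne
      · rcases d with _ | _ | _ <;> simp [h1, h2]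
    rw [Finset.sum_congr rfl hA, Finset.sum_add_distrib]
    simp [Finset.sum_boole]
  · -- non-internal edges: cut edges contribute, outside edges contribute 0
    rw [← Finset.sum_filter_add_sum_filter_not
      ((G.E \ S).filter (fun e => ¬((G.ends e).1 ∈ Z ∧ (G.ends e).2 ∈ Z)))
      (fun e => ((G.ends e).1 ∈ Z ∧ (G.ends e).2 ∉ Z) ∨ ((G.ends e).1 ∉ Z ∧ (G.ends e).2 ∈ Z))]
    have hcut : ((G.E \ S).filter (fun e => ¬((G.ends e).1 ∈ Z ∧ (G.ends e).2 ∈ Z))).filter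
        (fun e => ((G.ends e).1 ∈ Z ∧ (G.ends e).2 ∉ Z) ∨ ((G.ends e).1 ∉ Z ∧ (G.ends e).2 ∈ Z))
        = G.cutEdges S Z := by
      rw [Finset.filter_filter]
      apply Finset.filter_congr
      intro e _
      constructor
      · rintro ⟨_, h⟩; exact h
      · intro h; exact ⟨by tauto, h⟩
    rw [hcut]
    have hout : ∀ e ∈ ((G.E \ S).filter (fun e => ¬((G.ends e).1 ∈ Z ∧ (G.ends e).2 ∈ Z))).filter
        (fun e => ¬(((G.ends e).1 ∈ Z ∧ (G.ends e).2 ∉ Z) ∨ ((G.ends e).1 ∉ Z ∧ (G.ends e).2 ∈ Z))),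
        (∑ v ∈ Z, dirT (O e) (G.ends e) v) = 0 := by
      intro e he
      rw [Finset.mem_filter, Finset.mem_filter] at he
      obtain ⟨⟨_, hP⟩, hQ⟩ := he
      have h1 : (G.ends e).1 ∉ Z := by tauto
      have h2 : (G.ends e).2 ∉ Z := by tauto
      rw [sum_dirT]
      rcases O e with _ | d
      · simp
      · rcases d with _ | _ | _ <;> simp [h1, h2]
    rw [Finset.sum_congr rfl hout]
    simp

lemma sum_tOr_VZ {S : Finset ℕ} {O : Orient} (hO : G.IsOrientOn S O) (Z : Finset ℕ) :
    ∑ v ∈ G.V \ Z, G.tOr O v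
      = ((((G.E \ S).filter (fun e => (G.ends e).1 ∉ Z ∧ (G.ends e).2 ∉ Z)).card
        + (((G.E \ S).filter (fun e => (G.ends e).1 ∉ Z ∧ (G.ends e).2 ∉ Z)).filter
            (fun e => O e = some EdgeDir.bi)).card)
        + ∑ e ∈ G.cutEdges S Z, ∑ v ∈ G.V \ Z, dirT (O e) (G.ends e) v) := by
  unfold tOr
  rw [Finset.sum_comm]
  have hzero : ∀ e ∈ G.E, e ∉ G.E \ S → ∑ v ∈ G.V \ Z, dirT (O e) (G.ends e) v = 0 := by
    intro e _ heS
    apply Finset.sum_eq_zero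
    intro v _
    rw [G.orient_none hO heS]; rfl
  rw [← Finset.sum_subset (Finset.sdiff_subset : G.E \ S ⊆ G.E) hzero]
  rw [← Finset.sum_filter_add_sum_filter_not (G.E \ S)
    (fun e => (G.ends e).1 ∉ Z ∧ (G.ends e).2 ∉ Z)]
  congr 1
  · -- edges with both ends outside Z
    have hA : ∀ e ∈ (G.E \ S).filter (fun e => (G.ends e).1 ∉ Z ∧ (G.ends e).2 ∉ Z),
        (∑ v ∈ G.V \ Z, dirT (O e) (G.ends e) v)
        = 1 + (if O e = some EdgeDir.bi then 1 else 0) := by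
      intro e he
      rw [Finset.mem_filter] at he
      obtain ⟨heES, h1, h2⟩ := he
      have heE : e ∈ G.E := (Finset.mem_sdiff.1 heES).1
      have hm1 : (G.ends e).1 ∈ G.V \ Z := Finset.mem_sdiff.2 ⟨(G.ends_mem e heE).1, h1⟩
      have hm2 : (G.ends e).2 ∈ G.V \ Z := Finset.mem_sdiff.2 ⟨(G.ends_mem e heE).2, h2⟩
      have hne := (hO e).2 heES
      rw [sum_dirT]
      rcases hOe : O e with _ | d
      · exact absurd hOe hne
      · rcases d with _ | _ | _ <;> simp [hm1, hm2]
    rw [Finset.sum_congr rfl hA, Finset.sum_add_distrib]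
    simp [Finset.sum_boole]
  · rw [← Finset.sum_filter_add_sum_filter_not
      ((G.E \ S).filter (fun e => ¬((G.ends e).1 ∉ Z ∧ (G.ends e).2 ∉ Z)))
      (fun e => ((G.ends e).1 ∈ Z ∧ (G.ends e).2 ∉ Z) ∨ ((G.ends e).1 ∉ Z ∧ (G.ends e).2 ∈ Z))]
    have hcut : ((G.E \ S).filter (fun e => ¬((G.ends e).1 ∉ Z ∧ (G.ends e).2 ∉ Z))).filter
        (fun e => ((G.ends e).1 ∈ Z ∧ (G.ends e).2 ∉ Z) ∨ ((G.ends e).1 ∉ Z ∧ (G.ends e).2 ∈ Z))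
        = G.cutEdges S Z := by
      rw [Finset.filter_filter]
      apply Finset.filter_congr
      intro e _
      constructor
      · rintro ⟨_, h⟩; exact h
      · intro h; exact ⟨by tauto, h⟩
    rw [hcut]
    have hout : ∀ e ∈ ((G.E \ S).filter (fun e => ¬((G.ends e).1 ∉ Z ∧ (G.ends e).2 ∉ Z))).filter
        (fun e => ¬(((G.ends e).1 ∈ Z ∧ (G.ends e).2 ∉ Z) ∨ ((G.ends e).1 ∉ Z ∧ (G.ends e).2 ∈ Z))),
        (∑ v ∈ G.V \ Z, dirT (O e) (G.ends e) v) = 0 := by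
      intro e he
      rw [Finset.mem_filter, Finset.mem_filter] at he
      obtain ⟨⟨_, hP⟩, hQ⟩ := he
      have h1 : (G.ends e).1 ∈ Z := by tauto
      have h2 : (G.ends e).2 ∈ Z := by tauto
      have hn1 : (G.ends e).1 ∉ G.V \ Z := fun h => (Finset.mem_sdiff.1 h).2 h1
      have hn2 : (G.ends e).2 ∉ G.V \ Z := fun h => (Finset.mem_sdiff.1 h).2 h2
      rw [sum_dirT]
      rcases O e with _ | d
      · simp
      · rcases d with _ | _ | _ <;> simp [hn1, hn2]
    rw [Finset.sum_congr rfl hout]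
    simp

lemma restr_apply_mem {O : Orient} {D : Finset ℕ} {e : ℕ} (h : e ∈ D) : restr O D e = O e :=
  if_pos h

lemma restr_apply_not_mem {O : Orient} {D : Finset ℕ} {e : ℕ} (h : e ∉ D) : restr O D e = none :=
  if_neg h

lemma restr_eq_self {S : Finset ℕ} {O : Orient} (hO : G.IsOrientOn S O) :
    restr O (G.E \ S) = O := by
  funext e
  by_cases h : e ∈ G.E \ S
  · exact restr_apply_mem h
  · rw [restr_apply_not_mem h, G.orient_none hO h]

lemma restr_restr {O : Orient} {D D' : Finset ℕ} (h : D' ⊆ D) :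
    restr (restr O D) D' = restr O D' := by
  funext e
  by_cases he : e ∈ D'
  · rw [restr_apply_mem he, restr_apply_mem he, restr_apply_mem (h he)]
  · rw [restr_apply_not_mem he, restr_apply_not_mem he]

lemma isOrientOn_restr {T S : Finset ℕ} {O : Orient} (hO : G.IsOrientOn T O)
    (hsub : G.E \ S ⊆ G.E \ T) : G.IsOrientOn S (restr O (G.E \ S)) := by
  intro e
  by_cases h : e ∈ G.E \ S
  · rw [restr_apply_mem h]
    exact ⟨fun _ => h, fun _ => (hO e).2 (hsub h)⟩
  · rw [restr_apply_not_mem h]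
    constructor
    · intro hc; exact absurd rfl hc
    · intro hc; exact absurd hc h

lemma biE_restr (O : Orient) (D : Finset ℕ) : G.biE (restr O D) = (G.biE O) ∩ D := by
  ext e
  unfold biE
  rw [Finset.mem_inter, Finset.mem_filter, Finset.mem_filter]
  by_cases he : e ∈ D
  · rw [restr_apply_mem he]; tauto
  · rw [restr_apply_not_mem he]
    constructor
    · rintro ⟨_, h⟩; exact absurd h.symm (by simp)
    · rintro ⟨_, h⟩; exact absurd h he

lemma equivOr_refl {S : Finset ℕ} {b : ℕ} {O : Orient} (h : G.IsOrientOn S O) :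
    G.equivOr S b O O := ⟨h, h, rfl⟩

lemma equivOr_symm {S : Finset ℕ} {b : ℕ} {O O' : Orient} (h : G.equivOr S b O O') :
    G.equivOr S b O' O := ⟨h.2.1, h.1, h.2.2.symm⟩

lemma filter_bi_empty {S : Finset ℕ} {O : Orient} (hO : G.IsOrientOn S O)
    (hbi : G.biE O = ∅) {s : Finset ℕ} (hs : s ⊆ G.E \ S) :
    s.filter (fun e => O e = some EdgeDir.bi) = ∅ := by
  rw [Finset.eq_empty_iff_forall_notMem]
  intro e he
  rw [Finset.mem_filter] at he
  have : e ∈ G.biE O := by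
    rw [G.biE_eq_filter hO]
    exact Finset.mem_filter.2 ⟨hs he.1, he.2⟩
  rw [hbi] at this
  exact absurd this (Finset.notMem_empty e)

lemma totcyc_of_equiv {S : Finset ℕ} {O O' : Orient}
    (hO : G.IsOrientOn S O) (hO' : G.IsOrientOn S O')
    (ht : ∀ v, G.tOr O v = G.tOr O' v)
    (hbi : G.biE O = ∅) (hbi' : G.biE O' = ∅)
    (htc : G.TotCyc S O) : G.TotCyc S O' := by
  intro Z hZV hZne hZV' hcut
  obtain ⟨h1, h2⟩ := htc Z hZV hZne hZV' hcut
  constructor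
  · rw [G.cut_pos_iff] at h1 ⊢
    have e1 := G.sum_tOr_Z hO Z
    have e2 := G.sum_tOr_Z hO' Z
    rw [G.filter_bi_empty hO hbi (s := G.indEdges S Z) (Finset.filter_subset _ _)] at e1
    rw [G.filter_bi_empty hO' hbi' (s := G.indEdges S Z) (Finset.filter_subset _ _)] at e2
    have hts : ∑ v ∈ Z, G.tOr O v = ∑ v ∈ Z, G.tOr O' v :=
      Finset.sum_congr rfl (fun v _ => ht v)
    simp only [Finset.card_empty] at e1 e2
    omega
  · rw [G.cut_pos_iff] at h2 ⊢
    have e1 := G.sum_tOr_VZ hO Z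
    have e2 := G.sum_tOr_VZ hO' Z
    rw [G.filter_bi_empty hO hbi (Finset.filter_subset _ _)] at e1
    rw [G.filter_bi_empty hO' hbi' (Finset.filter_subset _ _)] at e2
    have hts : ∑ v ∈ G.V \ Z, G.tOr O v = ∑ v ∈ G.V \ Z, G.tOr O' v :=
      Finset.sum_congr rfl (fun v _ => ht v)
    simp only [Finset.card_empty] at e1 e2
    omega

lemma mem_biE_iff {O : Orient} {e : ℕ} : e ∈ G.biE O ↔ e ∈ G.E ∧ O e = some EdgeDir.bi :=
  Finset.mem_filter

lemma rooted_of_equiv {S : Finset ℕ} {O O' : Orient} {e₀ e₁ : ℕ}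
    (hO : G.IsOrientOn S O) (hO' : G.IsOrientOn S O')
    (ht : ∀ v, G.tOr O v = G.tOr O' v)
    (hbi : G.biE O = {e₀}) (hbi' : G.biE O' = {e₁})
    (hrt : G.RootedAt S O e₀) : G.RootedAt S O' e₁ := by
  intro Z hZV hZV' hind
  have he₀bi : O e₀ = some EdgeDir.bi :=
    (G.mem_biE_iff.1 (hbi ▸ Finset.mem_singleton_self e₀)).2
  have he₀ES : e₀ ∈ G.E \ S := (hO e₀).1 (by rw [he₀bi]; simp)
  have he₁ind := hind
  rw [MGraph.indEdges, Finset.mem_filter] at he₁ind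
  obtain ⟨he₁ES, h₁Z1, h₁Z2⟩ := he₁ind
  -- the two master equations
  have e1 := G.sum_tOr_VZ hO Z
  have e2 := G.sum_tOr_VZ hO' Z
  have hts : ∑ v ∈ G.V \ Z, G.tOr O v = ∑ v ∈ G.V \ Z, G.tOr O' v :=
    Finset.sum_congr rfl (fun v _ => ht v)
  -- O' has no bioriented edge strictly outside Z
  have hf' : (((G.E \ S).filter (fun e => (G.ends e).1 ∉ Z ∧ (G.ends e).2 ∉ Z)).filter
      (fun e => O' e = some EdgeDir.bi)) = ∅ := by
    rw [Finset.eq_empty_iff_forall_notMem]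
    intro e he
    rw [Finset.mem_filter, Finset.mem_filter] at he
    obtain ⟨⟨heES, hp1, _⟩, hbe⟩ := he
    have : e ∈ G.biE O' := G.mem_biE_iff.2 ⟨(Finset.mem_sdiff.1 heES).1, hbe⟩
    rw [hbi', Finset.mem_singleton] at this
    subst this
    exact hp1 h₁Z1
  rw [hf'] at e2
  simp only [Finset.card_empty] at e2
  have hfO : (((G.E \ S).filter (fun e => (G.ends e).1 ∉ Z ∧ (G.ends e).2 ∉ Z)).filter
      (fun e => O e = some EdgeDir.bi)) ⊆ {e₀} := by
    intro e he
    rw [Finset.mem_filter, Finset.mem_filter] at he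
    obtain ⟨⟨heES, _, _⟩, hbe⟩ := he
    have : e ∈ G.biE O := G.mem_biE_iff.2 ⟨(Finset.mem_sdiff.1 heES).1, hbe⟩
    rw [hbi] at this
    exact this
  rw [G.cut_pos_iff]
  by_cases hin : (G.ends e₀).1 ∈ Z ∧ (G.ends e₀).2 ∈ Z
  · -- e₀ internal to Z : use rootedness of O
    have h0 := hrt Z hZV hZV'
      (Finset.mem_filter.2 ⟨he₀ES, hin⟩)
    rw [G.cut_pos_iff] at h0
    have hfO0 : (((G.E \ S).filter (fun e => (G.ends e).1 ∉ Z ∧ (G.ends e).2 ∉ Z)).filter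
        (fun e => O e = some EdgeDir.bi)) = ∅ := by
      rw [Finset.eq_empty_iff_forall_notMem]
      intro e he
      have he' := hfO he
      rw [Finset.mem_singleton] at he'
      subst he'
      rw [Finset.mem_filter, Finset.mem_filter] at he
      exact he.1.2.1 hin.1
    rw [hfO0] at e1
    simp only [Finset.card_empty] at e1
    omega
  · by_cases hout : (G.ends e₀).1 ∉ Z ∧ (G.ends e₀).2 ∉ Z
    · -- e₀ strictly outside Z : O' gains one target outside
      have hfO1 : (((G.E \ S).filter (fun e => (G.ends e).1 ∉ Z ∧ (G.ends e).2 ∉ Z)).filter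
          (fun e => O e = some EdgeDir.bi)) = {e₀} := by
        apply Finset.Subset.antisymm hfO
        intro e he
        rw [Finset.mem_singleton] at he
        subst he
        exact Finset.mem_filter.2 ⟨Finset.mem_filter.2 ⟨he₀ES, hout⟩, he₀bi⟩
      rw [hfO1] at e1
      simp only [Finset.card_singleton] at e1
      omega
    · -- e₀ crosses Z : O already has a target outside Z at e₀
      have hcr : ((G.ends e₀).1 ∈ Z ∧ (G.ends e₀).2 ∉ Z) ∨
          ((G.ends e₀).1 ∉ Z ∧ (G.ends e₀).2 ∈ Z) := by tauto
      have he₀cut : e₀ ∈ G.cutEdges S Z := Finset.mem_filter.2 ⟨he₀ES, hcr⟩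
      have he₀E : e₀ ∈ G.E := (Finset.mem_sdiff.1 he₀ES).1
      have hv1 : (G.ends e₀).1 ∈ G.V := (G.ends_mem e₀ he₀E).1
      have hv2 : (G.ends e₀).2 ∈ G.V := (G.ends_mem e₀ he₀E).2
      have hpos : 0 < ∑ v ∈ G.V \ Z, dirT (O e₀) (G.ends e₀) v := by
        rw [he₀bi, sum_dirT]
        rcases hcr with ⟨hc1, hc2⟩ | ⟨hc1, hc2⟩
        · have : (G.ends e₀).2 ∈ G.V \ Z := Finset.mem_sdiff.2 ⟨hv2, hc2⟩
          simp [this]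
        · have : (G.ends e₀).1 ∈ G.V \ Z := Finset.mem_sdiff.2 ⟨hv1, hc1⟩
          simp [this]
      have hcutO : 0 < ∑ e ∈ G.cutEdges S Z, ∑ v ∈ G.V \ Z, dirT (O e) (G.ends e) v :=
        lt_of_lt_of_le hpos (Finset.single_le_sum
          (f := fun e => ∑ v ∈ G.V \ Z, dirT (O e) (G.ends e) v)
          (fun i _ => Nat.zero_le _) he₀cut)
      have hcard := Finset.card_le_card hfO
      simp only [Finset.card_singleton] at hcard
      omega

lemma memOb_of_equiv {S : Finset ℕ} {b : ℕ} {O O' : Orient}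
    (h : G.equivOr S b O O') (hm : G.MemOb S b O) : G.MemOb S b O' := by
  obtain ⟨hor, hcase⟩ := hm
  have hor' := h.2.1
  have ht := G.tOr_eq_of_equiv h
  have hbicard : (G.biE O).card = (G.biE O').card := by
    have s1 := G.sum_tOr S O hor
    have s2 := G.sum_tOr S O' hor'
    have : ∑ v ∈ G.V, G.tOr O v = ∑ v ∈ G.V, G.tOr O' v :=
      Finset.sum_congr rfl (fun v _ => ht v)
    omega
  rcases hcase with ⟨hb0, hbi, htc⟩ | ⟨hb1, hr1⟩
  · refine ⟨hor', Or.inl ⟨hb0, ?_, ?_⟩⟩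
    · rw [← Finset.card_eq_zero, ← hbicard, Finset.card_eq_zero, hbi]
    · have hbi' : G.biE O' = ∅ := by
        rw [← Finset.card_eq_zero, ← hbicard, Finset.card_eq_zero, hbi]
      exact G.totcyc_of_equiv hor hor' ht hbi hbi' htc
  · rcases hr1 with ⟨e₀, hbi, hrt⟩ | ⟨hES, hV⟩
    · have hbicard1 : (G.biE O').card = 1 := by
        rw [← hbicard, hbi, Finset.card_singleton]
      obtain ⟨e₁, hbi'⟩ := Finset.card_eq_one.1 hbicard1
      exact ⟨hor', Or.inr ⟨hb1, Or.inl ⟨e₁, hbi',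
        G.rooted_of_equiv hor hor' ht hbi hbi' hrt⟩⟩⟩
    · exact ⟨hor', Or.inr ⟨hb1, Or.inr ⟨hES, hV⟩⟩⟩
end MGraph

namespace OPAux

/-- edges of `F` crossing the set `Z` (under the end-map `τ`). -/
noncomputable def across (F : Finset ℕ) (τ : ℕ → ℕ × ℕ) (Z : Set ℕ) : Finset ℕ :=
  F.filter (fun e => ((τ e).1 ∈ Z ∧ (τ e).2 ∉ Z) ∨ ((τ e).1 ∉ Z ∧ (τ e).2 ∈ Z))

/-- target of an edge under the orientation `ε`. -/
def atgt (ε : ℕ → Bool) (τ : ℕ → ℕ × ℕ) (e : ℕ) : ℕ := if ε e then (τ e).2 else (τ e).1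

/-- source of an edge under the orientation `ε`. -/
def asrc (ε : ℕ → Bool) (τ : ℕ → ℕ × ℕ) (e : ℕ) : ℕ := if ε e then (τ e).1 else (τ e).2

lemma across_compl (F : Finset ℕ) (τ : ℕ → ℕ × ℕ) (Z : Set ℕ) :
    across F τ Zᶜ = across F τ Z := by
  ext e
  simp only [across, Finset.mem_filter, Set.mem_compl_iff, not_not]
  tauto

lemma cross_src {F : Finset ℕ} {τ : ℕ → ℕ × ℕ} {W : Set ℕ} {f : ℕ}
    (hf : f ∈ across F τ W) (ε : ℕ → Bool) :
    (atgt ε τ f ∈ W ∧ asrc ε τ f ∉ W) ∨ (atgt ε τ f ∉ W ∧ asrc ε τ f ∈ W) := by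
  rw [across, Finset.mem_filter] at hf
  unfold atgt asrc
  cases ε f <;> simp <;> tauto

lemma mem_across_iff {F : Finset ℕ} {τ : ℕ → ℕ × ℕ} {W : Set ℕ} {f : ℕ}
    (hfF : f ∈ F) (ε : ℕ → Bool) :
    f ∈ across F τ W ↔
      ((atgt ε τ f ∈ W ∧ asrc ε τ f ∉ W) ∨ (atgt ε τ f ∉ W ∧ asrc ε τ f ∈ W)) := by
  rw [across, Finset.mem_filter]
  unfold atgt asrc
  cases ε f <;> simp [hfF] <;> tauto

lemma mem_of_mem_across {F : Finset ℕ} {τ : ℕ → ℕ × ℕ} {Z : Set ℕ} {e : ℕ}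
    (h : e ∈ across F τ Z) : e ∈ F := by
  rw [across, Finset.mem_filter] at h
  exact h.1

lemma exists_other_of_ne_singleton {s : Finset ℕ} {e : ℕ} (he : e ∈ s) (hne : s ≠ {e}) :
    ∃ f ∈ s, f ≠ e := by
  by_contra hcon
  push_neg at hcon
  apply hne
  apply Finset.Subset.antisymm
  · intro x hx
    rw [Finset.mem_singleton]
    exact hcon x hx
  · intro x hx
    rw [Finset.mem_singleton] at hx
    rw [hx]; exact he

theorem exists_totcyc_abstract (F : Finset ℕ) (τ : ℕ → ℕ × ℕ)
    (hnb : ∀ e ∈ F, ∀ Z : Set ℕ, across F τ Z ≠ {e}) :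
    ∃ ε : ℕ → Bool, ∀ Z : Set ℕ, (across F τ Z).Nonempty →
      (∃ e ∈ across F τ Z, atgt ε τ e ∈ Z) ∧ (∃ e ∈ across F τ Z, atgt ε τ e ∉ Z) := by
  generalize hn : F.card = n
  induction n using Nat.strong_induction_on generalizing F τ with
  | _ n ih =>
  rcases Finset.eq_empty_or_nonempty F with rfl | ⟨e₀, he₀⟩
  · refine ⟨fun _ => true, fun Z hZ => absurd hZ ?_⟩
    simp [across]
  · have hnpos : 1 ≤ n := by
      rw [← hn]
      exact Finset.card_pos.2 ⟨e₀, he₀⟩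
    set a := (τ e₀).1 with ha
    set b := (τ e₀).2 with hb
    set q : ℕ → ℕ := fun x => if x = b then a else x with hq
    set τ' : ℕ → ℕ × ℕ := fun e => (q (τ e).1, q (τ e).2) with hτ'
    set F' := F.erase e₀ with hF'
    have hqa : q a = a := by
      by_cases h : a = b <;> simp [hq, h]
    have hqb : q b = a := by simp [hq]
    -- crossing translation
    have hK1 : ∀ (Z : Set ℕ), across F' τ' Z = across F' τ (q ⁻¹' Z) := by
      intro Z
      ext e
      simp only [across, Finset.mem_filter, hτ', Set.mem_preimage]
    -- q-preimages are the same as the set itself for saturated sets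
    have hK2 : ∀ (Z : Set ℕ), (a ∈ Z ↔ b ∈ Z) → q ⁻¹' Z = Z := by
      intro Z hsat
      ext x
      simp only [Set.mem_preimage, hq]
      by_cases hx : x = b
      · subst hx; simp only [if_pos rfl]; tauto
      · rw [if_neg hx]
    -- e₀ crosses no saturated set, hence `across` over F and F' agree there
    have hK3 : ∀ (Z : Set ℕ), (a ∈ Z ↔ b ∈ Z) → across F τ Z = across F' τ Z := by
      intro Z hsat
      ext e
      simp only [across, Finset.mem_filter, hF', Finset.mem_erase]
      constructor
      · rintro ⟨heF, hp⟩
        refine ⟨⟨?_, heF⟩, hp⟩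
        rintro rfl
        rw [← ha, ← hb] at hp
        tauto
      · rintro ⟨⟨_, heF⟩, hp⟩
        exact ⟨heF, hp⟩
    -- downstairs there are no bridges either
    have hnb' : ∀ f ∈ F', ∀ Z : Set ℕ, across F' τ' Z ≠ {f} := by
      intro f hf Z hcon
      rw [hK1] at hcon
      have hsat : a ∈ q ⁻¹' Z ↔ b ∈ q ⁻¹' Z := by
        simp only [Set.mem_preimage, hqa, hqb]
      rw [← hK3 _ hsat] at hcon
      exact hnb f (Finset.mem_of_mem_erase hf) _ hcon
    have hcard : F'.card = n - 1 := by
      rw [hF', Finset.card_erase_of_mem he₀, hn]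
    obtain ⟨ε', hε'⟩ := ih (n - 1) (by omega) F' τ' hnb' hcard
    -- translation of the downstairs conclusion to saturated sets
    have hK7 : ∀ (Z : Set ℕ), (a ∈ Z ↔ b ∈ Z) → (across F' τ Z).Nonempty →
        (∃ e ∈ across F' τ Z, atgt ε' τ e ∈ Z) ∧ (∃ e ∈ across F' τ Z, atgt ε' τ e ∉ Z) := by
      intro Z hsat hne
      have hZeq : across F' τ' Z = across F' τ Z := by rw [hK1, hK2 _ hsat]
      have hmem : ∀ x, q x ∈ Z ↔ x ∈ Z := by
        intro x
        have := hK2 _ hsat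
        constructor
        · intro h; rw [← this]; exact h
        · intro h; rw [← Set.mem_preimage, this]; exact h
      have htgt : ∀ e, (atgt ε' τ' e ∈ Z ↔ atgt ε' τ e ∈ Z) := by
        intro e
        unfold atgt
        cases ε' e <;> simp only [if_true, if_false, Bool.false_eq_true] <;>
          [skip; skip] <;> simp [hτ', hmem]
      obtain ⟨h1, h2⟩ := hε' Z (by rw [hZeq]; exact hne)
      constructor
      · obtain ⟨e, he, hte⟩ := h1
        exact ⟨e, by rw [← hZeq]; exact he, (htgt e).1 hte⟩
      · obtain ⟨e, he, hte⟩ := h2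
        refine ⟨e, by rw [← hZeq]; exact he, fun hc => hte ((htgt e).2 hc)⟩
    -- key dichotomy
    by_cases hP1 : ∃ Z : Set ℕ, a ∈ Z ∧ b ∉ Z ∧
        ∀ f ∈ across F τ Z, f ≠ e₀ → atgt ε' τ f ∉ Z
    · by_cases hP2 : ∃ Z : Set ℕ, b ∈ Z ∧ a ∉ Z ∧
          ∀ f ∈ across F τ Z, f ≠ e₀ → atgt ε' τ f ∉ Z
      · -- impossible: the uncrossing argument
        exfalso
        obtain ⟨Z, haZ, hbZ, hZ⟩ := hP1
        obtain ⟨Z', hbZ', haZ', hZ'⟩ := hP2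
        -- across of the intersection is empty
        have hcap : across F τ (Z ∩ Z') = ∅ := by
          by_contra hne
          rw [← Ne, ← Finset.nonempty_iff_ne_empty] at hne
          have hsat : a ∈ Z ∩ Z' ↔ b ∈ Z ∩ Z' := by
            constructor
            · rintro ⟨_, h⟩; exact absurd h haZ'
            · rintro ⟨h, _⟩; exact absurd h hbZ
          rw [hK3 _ hsat] at hne
          obtain ⟨⟨f, hf, htf⟩, _⟩ := hK7 _ hsat hne
          have hfF' : f ∈ F' := mem_of_mem_across hf
          have hfne : f ≠ e₀ := (Finset.mem_erase.1 hfF').1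
          have hs := cross_src hf ε'
          rcases hs with ⟨_, hsrc⟩ | ⟨hns, _⟩
          · -- source outside the intersection
            have hsZ : asrc ε' τ f ∉ Z ∨ asrc ε' τ f ∉ Z' := by
              by_contra hc; push_neg at hc; exact hsrc ⟨hc.1, hc.2⟩
            rcases hsZ with hs1 | hs2
            · have hfZ : f ∈ across F τ Z := by
                rw [mem_across_iff (Finset.mem_of_mem_erase hfF') ε']
                exact Or.inl ⟨htf.1, hs1⟩
              exact hZ f hfZ hfne htf.1
            · have hfZ' : f ∈ across F τ Z' := by
                rw [mem_across_iff (Finset.mem_of_mem_erase hfF') ε']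
                exact Or.inl ⟨htf.2, hs2⟩
              exact hZ' f hfZ' hfne htf.2
          · exact hns htf
        -- across of the union is empty
        have hcup : across F τ (Z ∪ Z') = ∅ := by
          by_contra hne
          rw [← Ne, ← Finset.nonempty_iff_ne_empty] at hne
          have hsat : a ∈ Z ∪ Z' ↔ b ∈ Z ∪ Z' := by
            constructor
            · intro _; exact Or.inr hbZ'
            · intro _; exact Or.inl haZ
          rw [hK3 _ hsat] at hne
          obtain ⟨⟨f, hf, htf⟩, _⟩ := hK7 _ hsat hne
          have hfF' : f ∈ F' := mem_of_mem_across hf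
          have hfne : f ≠ e₀ := (Finset.mem_erase.1 hfF').1
          have hs := cross_src hf ε'
          rcases hs with ⟨_, hsrc⟩ | ⟨hns, _⟩
          · have hsZ : asrc ε' τ f ∉ Z ∧ asrc ε' τ f ∉ Z' := by
              constructor <;> intro hc <;> exact hsrc (by tauto)
            rcases htf with htZ | htZ'
            · have hfZ : f ∈ across F τ Z := by
                rw [mem_across_iff (Finset.mem_of_mem_erase hfF') ε']
                exact Or.inl ⟨htZ, hsZ.1⟩
              exact hZ f hfZ hfne htZ
            · have hfZ' : f ∈ across F τ Z' := by
                rw [mem_across_iff (Finset.mem_of_mem_erase hfF') ε']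
                exact Or.inl ⟨htZ', hsZ.2⟩
              exact hZ' f hfZ' hfne htZ'
          · exact hns htf
        -- pick another crossing edge of Z
        have he₀Z : e₀ ∈ across F τ Z := by
          rw [across, Finset.mem_filter]
          exact ⟨he₀, Or.inl ⟨haZ, hbZ⟩⟩
        obtain ⟨f, hfZ, hfne⟩ := exists_other_of_ne_singleton he₀Z (hnb e₀ he₀ Z)
        have hfF : f ∈ F := mem_of_mem_across hfZ
        have hs := cross_src hfZ ε'
        have htnotZ : atgt ε' τ f ∉ Z := hZ f hfZ hfne
        have hsrcZ : asrc ε' τ f ∈ Z := by tauto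
        -- t must be in Z ∪ Z' (else f crosses the union)
        have htcup : atgt ε' τ f ∈ Z ∪ Z' := by
          by_contra hc
          have : f ∈ across F τ (Z ∪ Z') := by
            rw [mem_across_iff hfF ε']
            exact Or.inr ⟨hc, Or.inl hsrcZ⟩
          rw [hcup] at this
          exact absurd this (Finset.notMem_empty f)
        have htZ' : atgt ε' τ f ∈ Z' := by
          rcases htcup with h | h
          · exact absurd h htnotZ
          · exact h
        -- s must be outside Z' (else f crosses the intersection)
        have hsZ' : asrc ε' τ f ∉ Z' := by
          intro hc
          have : f ∈ across F τ (Z ∩ Z') := by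
            rw [mem_across_iff hfF ε']
            exact Or.inr ⟨fun hh => htnotZ hh.1, ⟨hsrcZ, hc⟩⟩
          rw [hcap] at this
          exact absurd this (Finset.notMem_empty f)
        have : f ∈ across F τ Z' := by
          rw [mem_across_iff hfF ε']
          exact Or.inl ⟨htZ', hsZ'⟩
        exact hZ' f this hfne htZ'
      · -- direction `false` (target a) works
        push_neg at hP2
        refine ⟨fun e => if e = e₀ then false else ε' e, ?_⟩
        intro Z hne
        have htgt_ne : ∀ f, f ≠ e₀ →
            atgt (fun e => if e = e₀ then false else ε' e) τ f = atgt ε' τ f := by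
          intro f hf
          simp [atgt, hf]
        have htgt_e₀ : atgt (fun e => if e = e₀ then false else ε' e) τ e₀ = a := by
          simp [atgt, ha]
        by_cases hsat : a ∈ Z ↔ b ∈ Z
        · rw [hK3 _ hsat] at hne ⊢
          obtain ⟨⟨f1, hf1, ht1⟩, ⟨f2, hf2, ht2⟩⟩ := hK7 _ hsat hne
          have hne1 : f1 ≠ e₀ := (Finset.mem_erase.1 (mem_of_mem_across hf1)).1
          have hne2 : f2 ≠ e₀ := (Finset.mem_erase.1 (mem_of_mem_across hf2)).1
          exact ⟨⟨f1, hf1, by rw [htgt_ne f1 hne1]; exact ht1⟩,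
            ⟨f2, hf2, by rw [htgt_ne f2 hne2]; exact ht2⟩⟩
        · have he₀cross : e₀ ∈ across F τ Z := by
            rw [across, Finset.mem_filter]
            refine ⟨he₀, ?_⟩
            rw [← ha, ← hb]
            tauto
          by_cases haZ : a ∈ Z
          · have hbZ : b ∉ Z := fun hc => hsat ⟨fun _ => hc, fun _ => haZ⟩
            refine ⟨⟨e₀, he₀cross, by rw [htgt_e₀]; exact haZ⟩, ?_⟩
            obtain ⟨f, hf, hfne, hft⟩ := hP2 Zᶜ hbZ (fun hc => hc haZ)
            rw [across_compl] at hf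
            exact ⟨f, hf, by rw [htgt_ne f hfne]; exact hft⟩
          · have hbZ : b ∈ Z := by tauto
            refine ⟨?_, ⟨e₀, he₀cross, by rw [htgt_e₀]; exact haZ⟩⟩
            obtain ⟨f, hf, hfne, hft⟩ := hP2 Z hbZ haZ
            exact ⟨f, hf, by rw [htgt_ne f hfne]; exact hft⟩
    · -- direction `true` (target b) works
      push_neg at hP1
      refine ⟨fun e => if e = e₀ then true else ε' e, ?_⟩
      intro Z hne
      have htgt_ne : ∀ f, f ≠ e₀ →
          atgt (fun e => if e = e₀ then true else ε' e) τ f = atgt ε' τ f := by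
        intro f hf
        simp [atgt, hf]
      have htgt_e₀ : atgt (fun e => if e = e₀ then true else ε' e) τ e₀ = b := by
        simp [atgt, hb]
      by_cases hsat : a ∈ Z ↔ b ∈ Z
      · rw [hK3 _ hsat] at hne ⊢
        obtain ⟨⟨f1, hf1, ht1⟩, ⟨f2, hf2, ht2⟩⟩ := hK7 _ hsat hne
        have hne1 : f1 ≠ e₀ := (Finset.mem_erase.1 (mem_of_mem_across hf1)).1
        have hne2 : f2 ≠ e₀ := (Finset.mem_erase.1 (mem_of_mem_across hf2)).1
        exact ⟨⟨f1, hf1, by rw [htgt_ne f1 hne1]; exact ht1⟩,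
          ⟨f2, hf2, by rw [htgt_ne f2 hne2]; exact ht2⟩⟩
      · have he₀cross : e₀ ∈ across F τ Z := by
          rw [across, Finset.mem_filter]
          refine ⟨he₀, ?_⟩
          rw [← ha, ← hb]
          tauto
        by_cases haZ : a ∈ Z
        · have hbZ : b ∉ Z := fun hc => hsat ⟨fun _ => hc, fun _ => haZ⟩
          refine ⟨?_, ⟨e₀, he₀cross, by rw [htgt_e₀]; exact hbZ⟩⟩
          obtain ⟨f, hf, hfne, hft⟩ := hP1 Z haZ hbZ
          exact ⟨f, hf, by rw [htgt_ne f hfne]; exact hft⟩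
        · have hbZ : b ∈ Z := by tauto
          refine ⟨⟨e₀, he₀cross, by rw [htgt_e₀]; exact hbZ⟩, ?_⟩
          obtain ⟨f, hf, hfne, hft⟩ := hP1 Zᶜ haZ (fun hc => hc hbZ)
          rw [across_compl] at hf
          exact ⟨f, hf, by rw [htgt_ne f hfne]; exact hft⟩

end OPAux

namespace MGraph

variable (G : MGraph)

lemma memOb_top0 : G.MemOb G.E 0 (fun _ => none) := by
  refine ⟨?_, Or.inl ⟨rfl, ?_, ?_⟩⟩
  · intro e
    simp [Finset.sdiff_self]
  · simp [MGraph.biE]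
  · intro Z _ _ _ hcut
    exfalso
    rw [MGraph.cutEdges, Finset.sdiff_self, Finset.filter_empty] at hcut
    exact Finset.not_nonempty_empty hcut

lemma ab_zero_no_bridge {T : Finset ℕ} (h : G.Ab 0 T) : ∀ e, ¬ G.IsBridge T e := by
  rcases h.2 with ⟨_, hnb⟩ | ⟨hc, _⟩
  · exact hnb
  · exact absurd hc (by norm_num)

lemma ext0 {S T : Finset ℕ} {O : Orient} (hSE : S ⊆ G.E) (hTS : T ⊆ S)
    (hTab : G.Ab 0 T) (hO : G.MemOb S 0 O) :
    ∃ O', G.MemOb T 0 O' ∧ restr O' (G.E \ S) = O := by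
  classical
  obtain ⟨hOor, hOc⟩ := hO
  have hObi : G.biE O = ∅ := by
    rcases hOc with ⟨_, hbi, _⟩ | ⟨hc, _⟩
    · exact hbi
    · exact absurd hc (by norm_num)
  have hOtc : G.TotCyc S O := by
    rcases hOc with ⟨_, _, htc⟩ | ⟨hc, _⟩
    · exact htc
    · exact absurd hc (by norm_num)
  set ρ := G.compRep S with hρ
  set τ : ℕ → ℕ × ℕ := fun e => (ρ (G.ends e).1, ρ (G.ends e).2) with hτ
  set F := S \ T with hF
  have hFE : ∀ f ∈ F, f ∈ G.E := fun f hf => hSE (Finset.mem_sdiff.1 hf).1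
  have hFET : F ⊆ G.E \ T := by
    intro f hf
    rw [Finset.mem_sdiff] at hf ⊢
    exact ⟨hSE hf.1, hf.2⟩
  have hFnotES : ∀ f ∈ F, f ∉ G.E \ S := by
    intro f hf hc
    exact (Finset.mem_sdiff.1 hc).2 (Finset.mem_sdiff.1 hf).1
  -- no ATC-bridges
  have hnb : ∀ e ∈ F, ∀ Z : Set ℕ, OPAux.across F τ Z ≠ {e} := by
    intro e heF Z hcon
    have heZ : e ∈ OPAux.across F τ Z := by
      rw [hcon]; exact Finset.mem_singleton_self e
    rw [OPAux.across, Finset.mem_filter] at heZ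
    have hpat := heZ.2
    set Zs : Set ℕ := {v | ρ v ∈ Z} with hZs
    have hbr : G.IsBridge T e := by
      apply G.bridge_of_singleton_cut (hFET heF) (Z := Zs)
      · exact hpat
      · intro g hgET hgne hgpat
        by_cases hgES : g ∈ G.E \ S
        · have hadj : G.adjOn (G.E \ S) (G.ends g).1 (G.ends g).2 :=
            G.adjOn_of_edge hgES (Finset.mem_sdiff.1 hgES).1
          have : ρ (G.ends g).1 = ρ (G.ends g).2 :=
            G.compRep_eq_iff.2 (Relation.EqvGen.rel _ _ hadj)
          simp only [hZs, Set.mem_setOf_eq] at hgpat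
          rw [this] at hgpat
          tauto
        · have hgF : g ∈ F := by
            rw [hF, Finset.mem_sdiff]
            rw [Finset.mem_sdiff] at hgET
            constructor
            · by_contra hgS
              exact hgES (Finset.mem_sdiff.2 ⟨hgET.1, hgS⟩)
            · exact hgET.2
          have : g ∈ OPAux.across F τ Z := by
            rw [OPAux.across, Finset.mem_filter]
            exact ⟨hgF, hgpat⟩
          rw [hcon, Finset.mem_singleton] at this
          exact hgne this
    exact G.ab_zero_no_bridge hTab e hbr
  obtain ⟨ε, hε⟩ := OPAux.exists_totcyc_abstract F τ hnb
  -- the extended orientation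
  set O' : Orient := fun f => if f ∈ G.E \ S then O f
    else if f ∈ F then (if ε f then some EdgeDir.fwd else some EdgeDir.bwd) else none with hO'
  have hOeq : ∀ f ∈ G.E \ S, O' f = O f := by
    intro f hf; simp only [hO', if_pos hf]
  have hOF : ∀ f ∈ F, O' f = (if ε f then some EdgeDir.fwd else some EdgeDir.bwd) := by
    intro f hf
    simp only [hO', if_neg (hFnotES f hf), if_pos hf]
  have hrestr : restr O' (G.E \ S) = O := by
    funext f
    by_cases hf : f ∈ G.E \ S
    · rw [restr_apply_mem hf, hOeq f hf]
    · rw [restr_apply_not_mem hf, G.orient_none hOor hf]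
  have hor' : G.IsOrientOn T O' := by
    intro f
    by_cases hf1 : f ∈ G.E \ S
    · rw [hOeq f hf1]
      have hfT : f ∈ G.E \ T := by
        rw [Finset.mem_sdiff] at hf1 ⊢
        exact ⟨hf1.1, fun hc => hf1.2 (hTS hc)⟩
      exact ⟨fun _ => hfT, fun _ => (hOor f).2 hf1⟩
    · by_cases hf2 : f ∈ F
      · simp only [hOF f hf2]
        refine ⟨fun _ => hFET hf2, fun _ => ?_⟩
        split <;> simp
      · simp only [hO', if_neg hf1, if_neg hf2]
        constructor
        · intro hc; exact absurd rfl hc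
        · intro hc
          exfalso
          rw [Finset.mem_sdiff] at hc
          apply hf2
          rw [hF, Finset.mem_sdiff]
          refine ⟨?_, hc.2⟩
          by_contra hS
          exact hf1 (Finset.mem_sdiff.2 ⟨hc.1, hS⟩)
  have hbi' : G.biE O' = ∅ := by
    rw [Finset.eq_empty_iff_forall_notMem]
    intro f hf
    rw [G.mem_biE_iff] at hf
    by_cases hf1 : f ∈ G.E \ S
    · rw [hOeq f hf1] at hf
      have : f ∈ G.biE O := G.mem_biE_iff.2 hf
      rw [hObi] at this
      exact absurd this (Finset.notMem_empty f)
    · by_cases hf2 : f ∈ F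
      · rw [hOF f hf2] at hf
        rcases hf with ⟨_, hc⟩
        split at hc <;> simp at hc
      · simp only [hO', if_neg hf1, if_neg hf2] at hf
        exact absurd hf.2.symm (by simp)
  refine ⟨O', ⟨hor', Or.inl ⟨rfl, hbi', ?_⟩⟩, hrestr⟩
  -- total cyclicity
  intro Z hZV hZne hZneV hcutne
  by_cases hcutS : (G.cutEdges S Z).Nonempty
  · obtain ⟨⟨e1, he1, v1, hv1, hd1⟩, ⟨e2, he2, v2, hv2, hd2⟩⟩ :=
      hOtc Z hZV hZne hZneV hcutS
    have hsub : G.cutEdges S Z ⊆ G.cutEdges T Z := by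
      intro e he
      rw [MGraph.cutEdges, Finset.mem_filter] at he ⊢
      obtain ⟨heES, hp⟩ := he
      rw [Finset.mem_sdiff] at heES
      exact ⟨Finset.mem_sdiff.2 ⟨heES.1, fun hc => heES.2 (hTS hc)⟩, hp⟩
    have hd1' : 0 < dirT (O' e1) (G.ends e1) v1 := by
      rw [hOeq e1 (Finset.filter_subset _ _ he1)]; exact hd1
    have hd2' : 0 < dirT (O' e2) (G.ends e2) v2 := by
      rw [hOeq e2 (Finset.filter_subset _ _ he2)]; exact hd2
    exact ⟨⟨e1, hsub he1, v1, hv1, hd1'⟩, ⟨e2, hsub he2, v2, hv2, hd2'⟩⟩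
  · have hcutS0 : G.cutEdges S Z = ∅ := Finset.not_nonempty_iff_eq_empty.1 hcutS
    have hsatur : ∀ u v, Relation.EqvGen (G.adjOn (G.E \ S)) u v → (u ∈ Z ↔ v ∈ Z) :=
      fun u v h => G.mem_iff_of_no_cut hcutS0 h
    set Z' : Set ℕ := {n | ∃ v ∈ Z, ρ v = n} with hZ'
    have hmemiff : ∀ x, ρ x ∈ Z' ↔ x ∈ Z := by
      intro x
      constructor
      · rintro ⟨v, hv, hrv⟩
        have : Relation.EqvGen (G.adjOn (G.E \ S)) v x := G.compRep_eq_iff.1 hrv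
        exact (hsatur v x this).1 hv
      · intro hx
        exact ⟨x, hx, rfl⟩
    have hacross : OPAux.across F τ Z' = G.cutEdges T Z := by
      ext f
      simp only [OPAux.across, MGraph.cutEdges, Finset.mem_filter, hτ, hmemiff]
      constructor
      · rintro ⟨hfF, hp⟩
        exact ⟨hFET hfF, hp⟩
      · rintro ⟨hfET, hp⟩
        refine ⟨?_, hp⟩
        by_cases hfES : f ∈ G.E \ S
        · exfalso
          have : f ∈ G.cutEdges S Z := Finset.mem_filter.2 ⟨hfES, hp⟩
          rw [hcutS0] at this
          exact absurd this (Finset.notMem_empty f)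
        · rw [hF, Finset.mem_sdiff]
          rw [Finset.mem_sdiff] at hfET
          constructor
          · by_contra hS
            exact hfES (Finset.mem_sdiff.2 ⟨hfET.1, hS⟩)
          · exact hfET.2
    obtain ⟨⟨e1, he1, ht1⟩, ⟨e2, he2, ht2⟩⟩ := hε Z' (by rw [hacross]; exact hcutne)
    -- build the two witnesses
    have hwit : ∀ e ∈ OPAux.across F τ Z',
        0 < dirT (O' e) (G.ends e) (if ε e then (G.ends e).2 else (G.ends e).1) ∧
        OPAux.atgt ε τ e = ρ (if ε e then (G.ends e).2 else (G.ends e).1) ∧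
        (if ε e then (G.ends e).2 else (G.ends e).1) ∈ G.V := by
      intro e he
      have heF : e ∈ F := OPAux.mem_of_mem_across he
      have heE : e ∈ G.E := hFE e heF
      rw [hOF e heF]
      rcases hεe : ε e with _ | _
      · simp only [hεe, if_false, Bool.false_eq_true]
        refine ⟨by simp [dirT], ?_, (G.ends_mem e heE).1⟩
        simp [OPAux.atgt, hεe, hτ]
      · simp only [hεe, if_true]
        refine ⟨by simp [dirT], ?_, (G.ends_mem e heE).2⟩
        simp [OPAux.atgt, hεe, hτ]
    constructor
    · obtain ⟨hd, hta, hV⟩ := hwit e1 he1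
      refine ⟨e1, by rw [← hacross]; exact he1,
        (if ε e1 then (G.ends e1).2 else (G.ends e1).1), ?_, hd⟩
      rw [hta] at ht1
      exact (hmemiff _).1 ht1
    · obtain ⟨hd, hta, hV⟩ := hwit e2 he2
      refine ⟨e2, by rw [← hacross]; exact he2,
        (if ε e2 then (G.ends e2).2 else (G.ends e2).1), ?_, hd⟩
      rw [hta] at ht2
      rw [Finset.mem_sdiff]
      exact ⟨hV, fun hc => ht2 ((hmemiff _).2 hc)⟩

lemma ab_one_conn {T : Finset ℕ} (h : G.Ab 1 T) : G.ConnSub G.V (G.E \ T) := by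
  rcases h.2 with ⟨hc, _⟩ | ⟨_, hconn⟩
  · exact absurd hc (by norm_num)
  · exact hconn

/-- `n`-step walks. -/
def stepN (F : Finset ℕ) : ℕ → ℕ → ℕ → Prop
  | 0, u, v => u = v
  | (n+1), u, v => ∃ w, stepN F n u w ∧ G.adjOn F w v

lemma rtg_of_eqvGen {F : Finset ℕ} {u v : ℕ}
    (h : Relation.EqvGen (G.adjOn F) u v) : Relation.ReflTransGen (G.adjOn F) u v := by
  induction h with
  | rel x y hxy => exact Relation.ReflTransGen.single hxy
  | refl x => exact Relation.ReflTransGen.refl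
  | symm x y _ ih =>
    haveI : Std.Symm (G.adjOn F) := ⟨fun _ _ h => G.adjOn_symm h⟩
    exact Std.Symm.symm _ _ ih
  | trans x y z _ _ ih1 ih2 => exact Relation.ReflTransGen.trans ih1 ih2

lemma stepN_of_rtg {F : Finset ℕ} {u v : ℕ}
    (h : Relation.ReflTransGen (G.adjOn F) u v) : ∃ n, G.stepN F n u v := by
  induction h with
  | refl => exact ⟨0, rfl⟩
  | tail _ hbc ih =>
    obtain ⟨n, hn⟩ := ih
    exact ⟨n + 1, _, hn, hbc⟩

lemma exists_memOb1 {T : Finset ℕ} (hconn : G.ConnSub G.V (G.E \ T)) :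
    ∃ O, G.MemOb T 1 O := by
  classical
  by_cases hET : G.E \ T = ∅
  · have hcard : G.V.card = 1 := by
      have h1 : G.ncomp G.V (G.E \ T) = G.V.card :=
        G.ncomp_eq_card_of_no_edges (by rw [Finset.inter_eq_left.2 Finset.sdiff_subset, hET])
      rw [MGraph.ConnSub] at hconn
      omega
    refine ⟨fun _ => none, ?_, Or.inr ⟨rfl, Or.inr ⟨hET, hcard⟩⟩⟩
    intro e
    rw [hET]
    simp
  · obtain ⟨e₀, he₀⟩ := Finset.nonempty_iff_ne_empty.2 hET
    have he₀E : e₀ ∈ G.E := (Finset.mem_sdiff.1 he₀).1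
    set r₀ := (G.ends e₀).1 with hr₀
    have hr₀V : r₀ ∈ G.V := (G.ends_mem e₀ he₀E).1
    have hallconn := (G.ncomp_eq_one_iff (F := G.E \ T)).1 hconn
    have hreach : ∀ v ∈ G.V, ∃ n, G.stepN (G.E \ T) n r₀ v := by
      intro v hv
      exact G.stepN_of_rtg (G.rtg_of_eqvGen (hallconn.2 r₀ hr₀V v hv))
    set d : ℕ → ℕ := fun v => if h : ∃ n, G.stepN (G.E \ T) n r₀ v then Nat.find h else 0
      with hd
    have hdnbr : ∀ v ∈ G.V, v ≠ r₀ → ∃ w, G.adjOn (G.E \ T) w v ∧ d w < d v ∧ w ∈ G.V := by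
      intro v hv hvne
      have h := hreach v hv
      have hdv : d v = Nat.find h := by simp only [hd, dif_pos h]
      have hspec := Nat.find_spec h
      rcases hn : Nat.find h with _ | n
      · rw [hn] at hspec
        exact absurd hspec.symm hvne
      · rw [hn] at hspec
        obtain ⟨w, hw, hadj⟩ := hspec
        have hw' : ∃ m, G.stepN (G.E \ T) m r₀ w := ⟨n, hw⟩
        have hdw : d w = Nat.find hw' := by simp only [hd, dif_pos hw']
        refine ⟨w, hadj, ?_, (G.adjOn_mem_V hadj).1⟩
        rw [hdv, hdw, hn]
        exact Nat.lt_succ_of_le (Nat.find_min' hw' hw)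
    set M := G.V.sup id with hM
    have hvM : ∀ v ∈ G.V, v ≤ M := fun v hv => Finset.le_sup (f := id) hv
    set κ : ℕ → ℕ := fun v => d v * (M + 1) + v with hκdef
    have hκ : ∀ v w, v ∈ G.V → w ∈ G.V →
        (d v < d w ∨ (d v = d w ∧ v < w)) → κ v < κ w := by
      intro v w hvV hwV hlt
      rcases hlt with hlt | ⟨heq, hlt⟩
      · have h1 : d v + 1 ≤ d w := hlt
        have h2 : (d v + 1) * (M + 1) ≤ d w * (M + 1) := Nat.mul_le_mul_right _ h1
        have h3 : v ≤ M := hvM v hvV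
        simp only [hκdef]
        nlinarith
      · simp only [hκdef, heq]
        omega
    set O : Orient := fun e => if e ∈ G.E \ T then
        (if e = e₀ then some EdgeDir.bi
         else if d (G.ends e).1 < d (G.ends e).2 ∨
             (d (G.ends e).1 = d (G.ends e).2 ∧ (G.ends e).1 < (G.ends e).2)
           then some EdgeDir.fwd else some EdgeDir.bwd)
      else none with hO
    have hor : G.IsOrientOn T O := by
      intro e
      by_cases he : e ∈ G.E \ T
      · simp only [hO, if_pos he]
        refine ⟨fun _ => he, fun _ => ?_⟩
        split
        · simp
        · split <;> simp
      · simp only [hO, if_neg he]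
        exact ⟨fun hc => absurd rfl hc, fun hc => absurd hc he⟩
    have hbiE : G.biE O = {e₀} := by
      ext f
      rw [G.mem_biE_iff, Finset.mem_singleton]
      constructor
      · rintro ⟨hfE, hbi⟩
        by_cases hf : f ∈ G.E \ T
        · simp only [hO, if_pos hf] at hbi
          by_cases hfe : f = e₀
          · exact hfe
          · rw [if_neg hfe] at hbi
            split at hbi <;> simp at hbi
        · simp only [hO, if_neg hf] at hbi
          exact absurd hbi.symm (by simp)
      · rintro rfl
        refine ⟨he₀E, ?_⟩
        have hx : f ∈ G.E ∧ f ∉ T := Finset.mem_sdiff.1 he₀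
        simp [hO, hx.1, hx.2]
    refine ⟨O, hor, Or.inr ⟨rfl, Or.inl ⟨e₀, hbiE, ?_⟩⟩⟩
    -- rootedness
    intro Z hZV hZneV hind
    rw [MGraph.indEdges, Finset.mem_filter] at hind
    obtain ⟨_, hr₀Z, _⟩ := hind
    obtain ⟨v₀, hv₀V, hv₀Z⟩ := Finset.exists_of_ssubset (hZV.ssubset_of_ne hZneV)
    obtain ⟨u, hu, hmin⟩ := Finset.exists_min_image (G.V \ Z) κ
      ⟨v₀, Finset.mem_sdiff.2 ⟨hv₀V, hv₀Z⟩⟩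
    have huV : u ∈ G.V := (Finset.mem_sdiff.1 hu).1
    have huZ : u ∉ Z := (Finset.mem_sdiff.1 hu).2
    have hune : u ≠ r₀ := fun hc => huZ (hc ▸ hr₀Z)
    obtain ⟨w, hadj, hdlt, hwV⟩ := hdnbr u huV hune
    have hwZ : w ∈ Z := by
      by_contra hwZ
      have hm1 := hmin w (Finset.mem_sdiff.2 ⟨hwV, hwZ⟩)
      have hm2 := hκ w u hwV huV (Or.inl hdlt)
      exact absurd hm2 (not_lt.2 hm1)
    obtain ⟨f, hfmem, hford⟩ := hadj
    rw [Finset.mem_inter] at hfmem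
    have hfET : f ∈ G.E \ T := hfmem.1
    have hfcut : f ∈ G.cutEdges T Z := by
      rw [MGraph.cutEdges, Finset.mem_filter]
      refine ⟨hfET, ?_⟩
      rcases hford with h' | h'
      · rw [h']
        exact Or.inl ⟨hwZ, huZ⟩
      · rw [h']
        exact Or.inr ⟨huZ, hwZ⟩
    refine ⟨f, hfcut, u, Finset.mem_sdiff.2 ⟨huV, huZ⟩, ?_⟩
    by_cases hfe : f = e₀
    · subst hfe
      simp only [hO, if_pos hfET, if_pos rfl]
      rcases hford with h' | h' <;> rw [h'] <;> simp [dirT]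
    · simp only [hO, if_pos hfET, if_neg hfe]
      rcases hford with h' | h'
      · have hc : d (G.ends f).1 < d (G.ends f).2 ∨
            (d (G.ends f).1 = d (G.ends f).2 ∧ (G.ends f).1 < (G.ends f).2) := by
          rw [h']
          dsimp only
          exact Or.inl hdlt
        rw [if_pos hc, h']
        simp [dirT]
      · have hc : ¬(d (G.ends f).1 < d (G.ends f).2 ∨
            (d (G.ends f).1 = d (G.ends f).2 ∧ (G.ends f).1 < (G.ends f).2)) := by
          rw [h']
          dsimp only
          push_neg
          exact ⟨by omega, fun hdeq => by omega⟩
        rw [if_neg hc, h']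
        simp [dirT]

lemma ext1 {S T : Finset ℕ} {O : Orient} (hSE : S ⊆ G.E) (hTS : T ⊆ S)
    (hO : G.MemOb S 1 O) :
    ∃ O', G.MemOb T 1 O' ∧ restr O' (G.E \ S) = O := by
  classical
  obtain ⟨hor, hOc⟩ := hO
  have hESET : G.E \ S ⊆ G.E \ T := by
    intro e he
    rw [Finset.mem_sdiff] at he ⊢
    exact ⟨he.1, fun hc => he.2 (hTS hc)⟩
  have hr1 : G.Rooted1 S O := by
    rcases hOc with ⟨hc, _⟩ | ⟨_, h⟩
    · exact absurd hc (by norm_num)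
    · exact h
  rcases hr1 with ⟨e₀, hbi, hrt⟩ | ⟨hES, hV⟩
  · -- generic case : extend by forward edges
    have he₀ : O e₀ = some EdgeDir.bi := (G.mem_biE_iff.1 (hbi ▸ Finset.mem_singleton_self e₀)).2
    have he₀ES : e₀ ∈ G.E \ S := (hor e₀).1 (by rw [he₀]; simp)
    set O' : Orient := fun f => if f ∈ G.E \ S then O f
      else if f ∈ G.E \ T then some EdgeDir.fwd else none with hO'
    have hOeq : ∀ f ∈ G.E \ S, O' f = O f := fun f hf => by simp only [hO', if_pos hf]
    have hrestr : restr O' (G.E \ S) = O := by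
      funext f
      by_cases hf : f ∈ G.E \ S
      · rw [restr_apply_mem hf, hOeq f hf]
      · rw [restr_apply_not_mem hf, G.orient_none hor hf]
    have hor' : G.IsOrientOn T O' := by
      intro f
      by_cases hf1 : f ∈ G.E \ S
      · rw [hOeq f hf1]
        exact ⟨fun _ => hESET hf1, fun _ => (hor f).2 hf1⟩
      · by_cases hf2 : f ∈ G.E \ T
        · simp only [hO', if_neg hf1, if_pos hf2]
          exact ⟨fun _ => hf2, fun _ => by simp⟩
        · simp only [hO', if_neg hf1, if_neg hf2]
          exact ⟨fun hc => absurd rfl hc, fun hc => absurd hc hf2⟩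
    have hbi' : G.biE O' = {e₀} := by
      ext f
      rw [G.mem_biE_iff, Finset.mem_singleton]
      constructor
      · rintro ⟨hfE, hfbi⟩
        by_cases hf1 : f ∈ G.E \ S
        · rw [hOeq f hf1] at hfbi
          have : f ∈ G.biE O := G.mem_biE_iff.2 ⟨hfE, hfbi⟩
          rw [hbi, Finset.mem_singleton] at this
          exact this
        · by_cases hf2 : f ∈ G.E \ T
          · simp only [hO', if_neg hf1, if_pos hf2] at hfbi
            exact absurd hfbi (by simp)
          · simp only [hO', if_neg hf1, if_neg hf2] at hfbi
            exact absurd hfbi.symm (by simp)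
      · intro hfe
        rw [hfe]
        exact ⟨(Finset.mem_sdiff.1 he₀ES).1, by rw [hOeq e₀ he₀ES]; exact he₀⟩
    refine ⟨O', ⟨hor', Or.inr ⟨rfl, Or.inl ⟨e₀, hbi', ?_⟩⟩⟩, hrestr⟩
    intro Z hZV hZneV hind
    rw [MGraph.indEdges, Finset.mem_filter] at hind
    have hindS : e₀ ∈ G.indEdges S Z := by
      rw [MGraph.indEdges, Finset.mem_filter]
      exact ⟨he₀ES, hind.2⟩
    obtain ⟨f, hf, v, hv, hd⟩ := hrt Z hZV hZneV hindS
    have hfES : f ∈ G.E \ S := Finset.filter_subset _ _ hf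
    have hfcut : f ∈ G.cutEdges T Z := by
      rw [MGraph.cutEdges, Finset.mem_filter] at hf ⊢
      exact ⟨hESET hf.1, hf.2⟩
    refine ⟨f, hfcut, v, hv, ?_⟩
    rw [hOeq f hfES]
    exact hd
  · -- degenerate case : a single vertex
    have hVcard := hV
    by_cases hET : G.E \ T = ∅
    · refine ⟨O, ⟨?_, Or.inr ⟨rfl, Or.inr ⟨hET, hVcard⟩⟩⟩, ?_⟩
      · intro e
        have : O e = none := G.orient_none hor (by rw [hES]; exact Finset.notMem_empty e)
        rw [this, hET]
        simp
      · funext e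
        have he : e ∉ G.E \ S := by rw [hES]; exact Finset.notMem_empty e
        rw [restr_apply_not_mem he, G.orient_none hor he]
    · obtain ⟨e₁, he₁⟩ := Finset.nonempty_iff_ne_empty.2 hET
      set O' : Orient := fun f => if f ∈ G.E \ T then
          (if f = e₁ then some EdgeDir.bi else some EdgeDir.fwd) else none with hO'
      have hor' : G.IsOrientOn T O' := by
        intro f
        by_cases hf : f ∈ G.E \ T
        · simp only [hO', if_pos hf]
          refine ⟨fun _ => hf, fun _ => ?_⟩
          split <;> simp
        · simp only [hO', if_neg hf]
          exact ⟨fun hc => absurd rfl hc, fun hc => absurd hc hf⟩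
      have hbi' : G.biE O' = {e₁} := by
        ext f
        rw [G.mem_biE_iff, Finset.mem_singleton]
        constructor
        · rintro ⟨hfE, hfbi⟩
          by_cases hf : f ∈ G.E \ T
          · simp only [hO', if_pos hf] at hfbi
            by_cases hfe : f = e₁
            · exact hfe
            · rw [if_neg hfe] at hfbi
              exact absurd hfbi (by simp)
          · simp only [hO', if_neg hf] at hfbi
            exact absurd hfbi.symm (by simp)
        · intro hfe
          rw [hfe]
          refine ⟨(Finset.mem_sdiff.1 he₁).1, ?_⟩
          have hx : e₁ ∈ G.E ∧ e₁ ∉ T := Finset.mem_sdiff.1 he₁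
          simp [hO', hx.1, hx.2]
      refine ⟨O', ⟨hor', Or.inr ⟨rfl, Or.inl ⟨e₁, hbi', ?_⟩⟩⟩, ?_⟩
      · intro Z hZV hZneV hind
        exfalso
        obtain ⟨v, hVv⟩ := Finset.card_eq_one.1 hVcard
        have hZ : Z = ∅ := by
          rw [hVv] at hZV hZneV
          rcases Finset.subset_singleton_iff.1 hZV with h | h
          · exact h
          · exact absurd h hZneV
        rw [MGraph.indEdges, Finset.mem_filter, hZ] at hind
        exact absurd hind.2.1 (Finset.notMem_empty _)
      · funext e
        have he : e ∉ G.E \ S := by rw [hES]; exact Finset.notMem_empty e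
        rw [restr_apply_not_mem he, G.orient_none hor he]

lemma ncomp_merge {F F' : Finset ℕ} (hFF : F ⊆ F') {k : ℕ} (x : Fin k → ℕ)
    (hxV : ∀ i, x i ∈ G.V)
    (hdist : ∀ i j, i ≠ j → ¬ Relation.EqvGen (G.adjOn F) (x i) (x j))
    (hconn : ∀ i j, Relation.EqvGen (G.adjOn F') (x i) (x j)) :
    G.ncomp G.V F' + (k - 1) ≤ G.ncomp G.V F := by
  apply OPAux.card_quot_merge
    (r := fun a b : {t : ℕ // t ∈ G.V} => G.adjOn F a.1 b.1)
    (r' := fun a b : {t : ℕ // t ∈ G.V} => G.adjOn F' a.1 b.1)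
    (x := fun i => (⟨x i, hxV i⟩ : {t : ℕ // t ∈ G.V}))
  · intro a b hab
    exact (G.eqvGen_subtype_iff a b).2 (Relation.EqvGen.rel _ _ (G.adjOn_mono hFF hab))
  · intro i j hne hcon
    exact hdist i j hne ((G.eqvGen_subtype_iff _ _).1 hcon)
  · intro i j
    exact (G.eqvGen_subtype_iff _ _).2 (hconn i j)

lemma subGenus_nonneg (F : Finset ℕ) : 0 ≤ G.subGenus G.V F := by
  unfold subGenus
  have h := G.card_V_le F
  have hw : 0 ≤ ∑ v ∈ G.V, (G.w v : ℤ) := Finset.sum_nonneg (fun _ _ => Int.ofNat_nonneg _)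
  omega

lemma subGenus_sdiff (X : Finset ℕ) : G.subGenus G.V (G.E \ X) =
    (∑ v ∈ G.V, (G.w v : ℤ)) - G.V.card + (G.E \ X).card + G.ncomp G.V (G.E \ X) := by
  unfold subGenus
  rw [Finset.inter_eq_left.2 Finset.sdiff_subset]

/-- Part 1 of the statement -/
lemma part1 {b : ℕ} {S T : Finset ℕ} (hTS : T ⊆ S) {OS OT : Orient}
    (hOS : G.MemOb S b OS) (hOT : G.MemOb T b OT) :
    ((∃ OS' OT', G.equivOr S b OS' OS ∧ G.equivOr T b OT' OT ∧
        restr OT' (G.E \ S) = OS') ↔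
     (∀ OS', G.equivOr S b OS' OS →
        ∃ OT', G.equivOr T b OT' OT ∧ restr OT' (G.E \ S) = OS')) := by
  constructor
  · rintro ⟨OS₀, OT₀, h1, h2, h3⟩ OS' hOS'
    have hsub : G.E \ S ⊆ G.E \ T :=
      Finset.sdiff_subset_sdiff (Finset.Subset.refl _) hTS
    set OT' : Orient := fun e => if e ∈ G.E \ S then OS' e else OT₀ e with hOT'def
    have hres : restr OT' (G.E \ S) = OS' := by
      funext e
      by_cases he : e ∈ G.E \ S
      · rw [restr_apply_mem he]; simp only [hOT'def, if_pos he]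
      · rw [restr_apply_not_mem he, G.orient_none hOS'.1 he]
    have hor : G.IsOrientOn T OT' := by
      intro e
      by_cases he : e ∈ G.E \ S
      · simp only [hOT'def, if_pos he]
        exact ⟨fun _ => hsub he, fun _ => (hOS'.1 e).2 he⟩
      · simp only [hOT'def, if_neg he]
        exact h2.1 e
    have hts : ∀ v, G.tOr OT' v = G.tOr OT₀ v := by
      intro v
      have hkey := G.tOr_add_eq (O1 := OT') (O2 := OT₀) (O3 := OS')
        (O4 := restr OT₀ (G.E \ S)) ?_ v
      · rw [h3] at hkey
        have h5 : G.tOr OS₀ v = G.tOr OS v := G.tOr_eq_of_equiv h1 v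
        have h6 : G.tOr OS' v = G.tOr OS v := G.tOr_eq_of_equiv hOS' v
        omega
      · intro e _ v'
        by_cases heS : e ∈ G.E \ S
        · simp only [hOT'def, if_pos heS, restr_apply_mem heS]
          exact Nat.add_comm _ _
        · simp only [hOT'def, if_neg heS, restr_apply_not_mem heS]
          rw [G.orient_none hOS'.1 heS]
    have hdiv : G.divOr T b OT' = G.divOr T b OT := by
      funext v
      unfold divOr
      by_cases hv : v ∈ G.V
      · rw [if_pos hv, if_pos hv]
        by_cases hET : G.E \ T = ∅
        · rw [if_pos hET, if_pos hET]
        · rw [if_neg hET, if_neg hET, hts v, G.tOr_eq_of_equiv h2 v]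
      · rw [if_neg hv, if_neg hv]
    exact ⟨OT', ⟨hor, h2.2.1, hdiv⟩, hres⟩
  · intro h
    obtain ⟨OT', h1, h2⟩ := h OS (G.equivOr_refl hOS.1)
    exact ⟨OS, OT', G.equivOr_refl hOS.1, h1, h2⟩

/-- Part 2 : partial order -/
lemma part2 (b : ℕ) : IsPartialOrderOnMod (G.POb b) (G.eqOP b) (G.leOPbar b) := by
  refine ⟨?_, ?_, ?_⟩
  · intro a ha
    refine ⟨Finset.Subset.refl _, a.2, G.equivOr_refl ha.2.1, ?_⟩
    rw [G.restr_eq_self ha.2.1]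
    exact G.equivOr_refl ha.2.1
  · intro p q r _ _ _ hpq hqr
    obtain ⟨hsub1, O', hO'q, hO'p⟩ := hpq
    obtain ⟨hsub2, O'', hO''r, hO''q⟩ := hqr
    refine ⟨hsub2.trans hsub1, ?_⟩
    have hsubq : G.E \ q.1 ⊆ G.E \ r.1 :=
      Finset.sdiff_subset_sdiff (Finset.Subset.refl _) hsub2
    have hsubp : G.E \ p.1 ⊆ G.E \ q.1 :=
      Finset.sdiff_subset_sdiff (Finset.Subset.refl _) hsub1
    set O₃ : Orient := fun e => if e ∈ G.E \ q.1 then O' e else O'' e with hO₃def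
    have hor : G.IsOrientOn r.1 O₃ := by
      intro e
      by_cases he : e ∈ G.E \ q.1
      · simp only [hO₃def, if_pos he]
        exact ⟨fun _ => hsubq he, fun _ => (hO'q.1 e).2 he⟩
      · simp only [hO₃def, if_neg he]
        exact hO''r.1 e
    have hts : ∀ v, G.tOr O₃ v = G.tOr O'' v := by
      intro v
      have hkey := G.tOr_add_eq (O1 := O₃) (O2 := O'') (O3 := O')
        (O4 := restr O'' (G.E \ q.1)) ?_ v
      · have h5 : G.tOr (restr O'' (G.E \ q.1)) v = G.tOr q.2 v := G.tOr_eq_of_equiv hO''q v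
        have h6 : G.tOr O' v = G.tOr q.2 v := G.tOr_eq_of_equiv hO'q v
        omega
      · intro e _ v'
        by_cases heq : e ∈ G.E \ q.1
        · simp only [hO₃def, if_pos heq, restr_apply_mem heq]
          exact Nat.add_comm _ _
        · simp only [hO₃def, if_neg heq, restr_apply_not_mem heq]
          rw [G.orient_none hO'q.1 heq]
    have hdiv : G.divOr r.1 b O₃ = G.divOr r.1 b r.2 := by
      have hd2 : G.divOr r.1 b O'' = G.divOr r.1 b r.2 := hO''r.2.2
      funext v
      rw [← hd2]
      unfold divOr
      by_cases hv : v ∈ G.V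
      · rw [if_pos hv, if_pos hv]
        by_cases hEr : G.E \ r.1 = ∅
        · rw [if_pos hEr, if_pos hEr]
        · rw [if_neg hEr, if_neg hEr, hts v]
      · rw [if_neg hv, if_neg hv]
    refine ⟨O₃, ⟨hor, hO''r.2.1, hdiv⟩, ?_⟩
    have hrr : restr O₃ (G.E \ p.1) = restr O' (G.E \ p.1) := by
      funext e
      by_cases he : e ∈ G.E \ p.1
      · rw [restr_apply_mem he, restr_apply_mem he]
        simp only [hO₃def, if_pos (hsubp he)]
      · rw [restr_apply_not_mem he, restr_apply_not_mem he]
    rw [hrr]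
    exact hO'p
  · intro p q hp hq hpq hqp
    obtain ⟨hsub1, O', hO'q, hO'p⟩ := hpq
    obtain ⟨hsub2, _⟩ := hqp
    have heq : p.1 = q.1 := Finset.Subset.antisymm hsub2 hsub1
    refine ⟨heq, hp.2.1, ?_, ?_⟩
    · have := hq.2.1
      rw [← heq] at this
      exact this
    · have hrO' : restr O' (G.E \ p.1) = O' := by
        rw [heq]
        exact G.restr_eq_self hO'q.1
      have h1 : G.divOr p.1 b p.2 = G.divOr p.1 b O' := by
        rw [← hO'p.2.2, hrO']
      have h2 : G.divOr q.1 b O' = G.divOr q.1 b q.2 := hO'q.2.2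
      rw [← heq] at h2
      rw [h1, h2]

/-- Part 3 : quotient of posets -/
lemma part3 (b : ℕ) (hb : b = 0 ∨ b = 1) :
    IsPosetQuotient (G.POb b) (G.Ab b) (G.leOPbar b) (fun S S' => S' ⊆ S) Prod.fst := by
  refine ⟨fun a ha => ha.1, fun a a' _ _ h => h.1, ?_, ?_⟩
  · intro S hS
    rcases hb with rfl | rfl
    · obtain ⟨O', hO', _⟩ := G.ext0 (Finset.Subset.refl G.E) hS.1 hS (G.memOb_top0)
      exact ⟨(S, O'), ⟨hS, hO'⟩, rfl⟩
    · obtain ⟨O, hO⟩ := G.exists_memOb1 (G.ab_one_conn hS)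
      exact ⟨(S, O), ⟨hS, hO⟩, rfl⟩
  · intro S S' hS hS' hsub
    rcases hb with rfl | rfl
    · obtain ⟨OS, hOS, _⟩ := G.ext0 (Finset.Subset.refl G.E) hS.1 hS (G.memOb_top0)
      obtain ⟨OT, hOT, hres⟩ := G.ext0 hS.1 hsub hS' hOS
      refine ⟨(S, OS), (S', OT), ⟨hS, hOS⟩, ⟨hS', hOT⟩, rfl, rfl, hsub, OT,
        G.equivOr_refl hOT.1, ?_⟩
      rw [hres]
      exact G.equivOr_refl hOS.1
    · obtain ⟨OS, hOS⟩ := G.exists_memOb1 (G.ab_one_conn hS)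
      obtain ⟨OT, hOT, hres⟩ := G.ext1 hS.1 hsub hOS
      refine ⟨(S, OS), (S', OT), ⟨hS, hOS⟩, ⟨hS', hOT⟩, rfl, rfl, hsub, OT,
        G.equivOr_refl hOT.1, ?_⟩
      rw [hres]
      exact G.equivOr_refl hOS.1

end MGraph

namespace OPAux

/-- around a cycle, both kinds of boolean transitions occur. -/
lemma bool_cycle (u : ℕ → Prop) (i j : ℕ) (hij : i ≤ j) (hcyc : u i ↔ u j) :
    ∀ m, i ≤ m → m < j → ¬(u m ↔ u (m + 1)) →
    (∃ l, i ≤ l ∧ l < j ∧ u l ∧ ¬u (l + 1)) ∧ (∃ l, i ≤ l ∧ l < j ∧ ¬u l ∧ u (l + 1)) := by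
  classical
  -- main sub-lemma, for an arbitrary predicate
  have L1 : ∀ (w : ℕ → Prop), (w i ↔ w j) →
      (∃ m, i ≤ m ∧ m < j ∧ w m ∧ ¬w (m + 1)) →
      ∃ l, i ≤ l ∧ l < j ∧ ¬w l ∧ w (l + 1) := by
    intro w hwc ⟨m, him, hmj, hwm, hwm1⟩
    by_contra hno
    push_neg at hno
    -- from m+1 up to j everything is false
    have hdown : ∀ p, m + 1 ≤ p → p ≤ j → ¬w p := by
      intro p hp1 hpj
      induction p, hp1 using Nat.le_induction with
      | base => exact hwm1
      | succ p hp ih =>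
        have hpj' : p ≤ j := by omega
        have hwp : ¬w p := ih (by omega)
        intro hwp1
        have hlp : i ≤ p := by omega
        have hplt : p < j := by omega
        exact (hno p hlp hplt hwp) hwp1
    have hwj : ¬w j := hdown j (by omega) (le_refl j)
    have hwi : ¬w i := fun hc => hwj (hwc.1 hc)
    -- from i up to m everything is false
    have hup : ∀ p, i ≤ p → p ≤ m → ¬w p := by
      intro p hip hpm
      induction p, hip using Nat.le_induction with
      | base => exact hwi
      | succ p hp ih =>
        have hwp : ¬w p := ih (by omega)
        intro hwp1
        exact (hno p hp (by omega) hwp) hwp1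
    exact (hup m him (le_refl m)) hwm
  intro m him hmj hne
  by_cases hum : u m
  · have h1 : ∃ l, i ≤ l ∧ l < j ∧ u l ∧ ¬u (l + 1) :=
      ⟨m, him, hmj, hum, fun hc => hne ⟨fun _ => hc, fun _ => hum⟩⟩
    exact ⟨h1, L1 u hcyc h1⟩
  · have h2 : ∃ l, i ≤ l ∧ l < j ∧ ¬u l ∧ u (l + 1) := by
      refine ⟨m, him, hmj, hum, ?_⟩
      by_contra hc
      exact hne ⟨fun hc' => absurd hc' hum, fun hc' => absurd hc' hc⟩
    have h2' : ∃ l, i ≤ l ∧ l < j ∧ (¬u l) ∧ ¬(¬u (l + 1)) := by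
      obtain ⟨l, h1', h2'', h3, h4⟩ := h2
      exact ⟨l, h1', h2'', h3, fun hc => hc h4⟩
    obtain ⟨l, hl1, hl2, hl3, hl4⟩ :=
      L1 (fun t => ¬u t) (not_congr hcyc) h2'
    refine ⟨⟨l, hl1, hl2, not_not.1 hl3, hl4⟩, h2⟩

end OPAux

namespace MGraph

variable (G : MGraph)

/-- Part 4 : the genus is a rank function. -/
lemma part4 (b : ℕ) (hb : b = 0 ∨ b = 1) :
    IsRankOnMod (G.POb b) (G.eqOP b) (G.leOPbar b)
      (fun p => (G.subGenus G.V (G.E \ p.1)).toNat) := by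
  classical
  rintro a a' ⟨hPa, hPa', hle, hne, hmax⟩
  obtain ⟨hsub, O', hO'T, hO'S⟩ := hle
  have hAbS := hPa.1
  have hMemS := hPa.2
  have hAbT := hPa'.1
  have hMemT := hPa'.2
  have hSE : a.1 ⊆ G.E := hAbS.1
  have hTE : a'.1 ⊆ G.E := hAbT.1
  have hsubESET : G.E \ a.1 ⊆ G.E \ a'.1 :=
    Finset.sdiff_subset_sdiff (Finset.Subset.refl _) hsub
  -- S ≠ T
  have hST : a.1 ≠ a'.1 := by
    intro h
    apply hne
    refine ⟨h, hMemS.1, ?_, ?_⟩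
    · have := hMemT.1
      rw [← h] at this
      exact this
    · have hrO' : restr O' (G.E \ a.1) = O' := by
        rw [h]
        exact G.restr_eq_self hO'T.1
      have h1 : G.divOr a.1 b a.2 = G.divOr a.1 b O' := by
        rw [← hO'S.2.2, hrO']
      have h2 : G.divOr a'.1 b O' = G.divOr a'.1 b a'.2 := hO'T.2.2
      rw [← h] at h2
      rw [h1, h2]
  have hSTne : (a.1 \ a'.1).Nonempty := by
    rw [Finset.sdiff_nonempty]
    intro hc
    exact hST (Finset.Subset.antisymm hc hsub)
  set k := (a.1 \ a'.1).card with hk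
  have hkpos : 1 ≤ k := Finset.card_pos.2 hSTne
  have hcTS : G.ncomp G.V (G.E \ a'.1) ≤ G.ncomp G.V (G.E \ a.1) := G.ncomp_mono hsubESET
  have hcards : (G.E \ a'.1).card = (G.E \ a.1).card + k := by
    have h2 : (G.E \ a'.1) \ (G.E \ a.1) = a.1 \ a'.1 := by
      ext x
      simp only [Finset.mem_sdiff]
      constructor
      · rintro ⟨⟨hxE, hxT⟩, hxn⟩
        refine ⟨?_, hxT⟩
        by_contra hxS
        exact hxn ⟨hxE, hxS⟩
      · rintro ⟨hxS, hxT⟩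
        exact ⟨⟨hSE hxS, hxT⟩, fun h => h.2 hxS⟩
    have h3 := Finset.card_sdiff_of_subset hsubESET
    rw [h2] at h3
    have h4 := Finset.card_le_card hsubESET
    omega
  -- the two-element helper
  have htwo : 2 ≤ k → ∀ e ∈ a.1 \ a'.1, ∃ f ∈ a.1 \ a'.1, f ≠ e := by
    intro h2k e _
    obtain ⟨x, hx, y, hy, hxy⟩ := Finset.one_lt_card.1 h2k
    by_cases hxe : x = e
    · exact ⟨y, hy, fun hc => hxy (hxe.trans hc.symm)⟩
    · exact ⟨x, hx, hxe⟩
  -- the generic interpolation contradiction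
  have hinterp : ∀ R : Finset ℕ, a'.1 ⊆ R → R ⊆ a.1 → R ≠ a.1 → R ≠ a'.1 →
      G.Ab b R → G.MemOb R b (restr O' (G.E \ R)) → False := by
    intro R hTR hRS hRneS hRneT hAbR hMemR
    have hsubSR : G.E \ a.1 ⊆ G.E \ R :=
      Finset.sdiff_subset_sdiff (Finset.Subset.refl _) hRS
    have horR : G.IsOrientOn R (restr O' (G.E \ R)) := hMemR.1
    have hlac : G.leOPbar b a (R, restr O' (G.E \ R)) := by
      refine ⟨hRS, restr O' (G.E \ R), G.equivOr_refl horR, ?_⟩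
      rw [restr_restr hsubSR]
      exact hO'S
    have hlca : G.leOPbar b (R, restr O' (G.E \ R)) a' :=
      ⟨hTR, O', hO'T, G.equivOr_refl horR⟩
    rcases hmax (R, restr O' (G.E \ R)) ⟨hAbR, hMemR⟩ hlac hlca with hq | hq
    · exact hRneS hq.1
    · exact hRneT hq.1
  -- upper bound : cS + 1 ≤ k + cT
  have hUB : G.ncomp G.V (G.E \ a.1) + 1 ≤ k + G.ncomp G.V (G.E \ a'.1) := by
    rcases hb with rfl | rfl
    · -- b = 0 : first removed edge is not a bridge
      obtain ⟨e, he⟩ := hSTne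
      have heET : e ∈ G.E \ a'.1 := by
        rw [Finset.mem_sdiff] at he ⊢
        exact ⟨hSE he.1, he.2⟩
      have hnb := G.ab_zero_no_bridge hAbT e
      have hle1 : G.ncomp G.V (G.E \ insert e a'.1) ≤ G.ncomp G.V (G.E \ a'.1) := by
        by_contra hc
        exact hnb ⟨heET, by omega⟩
      have hdecomp : G.E \ a.1 = (G.E \ insert e a'.1) \ ((a.1 \ a'.1).erase e) := by
        ext x
        simp only [Finset.mem_sdiff, Finset.mem_insert, Finset.mem_erase]
        constructor
        · rintro ⟨hxE, hxS⟩
          have hxe : x ≠ e := fun hc => hxS (hc ▸ (Finset.mem_sdiff.1 he).1)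
          have hxT : x ∉ a'.1 := fun hc => hxS (hsub hc)
          exact ⟨⟨hxE, fun hc => (by tauto : False)⟩, fun hc => hxS hc.2.1⟩
        · rintro ⟨⟨hxE, hx1⟩, hx2⟩
          refine ⟨hxE, fun hxS => ?_⟩
          have hxe : x ≠ e := fun hc => hx1 (Or.inl hc)
          have hxT : x ∉ a'.1 := fun hc => hx1 (Or.inr hc)
          exact hx2 ⟨hxe, hxS, hxT⟩
      have hbound := G.ncomp_sdiff_le (G.E \ insert e a'.1) ((a.1 \ a'.1).erase e)
      rw [← hdecomp] at hbound
      have hec : ((a.1 \ a'.1).erase e).card = k - 1 := by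
        rw [Finset.card_erase_of_mem he, hk]
      omega
    · -- b = 1 : both connected
      have h1 : G.ncomp G.V (G.E \ a.1) = 1 := G.ab_one_conn hAbS
      have h2 : G.ncomp G.V (G.E \ a'.1) = 1 := G.ab_one_conn hAbT
      omega
  -- lower bound, by contradiction (interpolation)
  have hLB : k + G.ncomp G.V (G.E \ a'.1) ≤ G.ncomp G.V (G.E \ a.1) + 1 := by
    by_contra hgap'
    have hgap : G.ncomp G.V (G.E \ a.1) + 2 ≤ k + G.ncomp G.V (G.E \ a'.1) := by omega
    rcases hb with rfl | rfl
    · -- b = 0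
      have hk2 : 2 ≤ k := by omega
      have hMemTO' : G.MemOb a'.1 0 O' := G.memOb_of_equiv (G.equivOr_symm hO'T) hMemT
      have hMemSres : G.MemOb a.1 0 (restr O' (G.E \ a.1)) :=
        G.memOb_of_equiv (G.equivOr_symm hO'S) hMemS
      have hbiO' : G.biE O' = ∅ := by
        rcases hMemTO'.2 with ⟨_, hbi, _⟩ | ⟨hc, _⟩
        · exact hbi
        · exact absurd hc (by norm_num)
      have htcO' : G.TotCyc a'.1 O' := by
        rcases hMemTO'.2 with ⟨_, _, htc⟩ | ⟨hc, _⟩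
        · exact htc
        · exact absurd hc (by norm_num)
      have hbiSres : G.biE (restr O' (G.E \ a.1)) = ∅ := by
        rcases hMemSres.2 with ⟨_, hbi, _⟩ | ⟨hc, _⟩
        · exact hbi
        · exact absurd hc (by norm_num)
      have htcSres : G.TotCyc a.1 (restr O' (G.E \ a.1)) := by
        rcases hMemSres.2 with ⟨_, _, htc⟩ | ⟨hc, _⟩
        · exact htc
        · exact absurd hc (by norm_num)
      -- common TotCyc transfer for supersets of edges
      have htcR : ∀ R : Finset ℕ, a'.1 ⊆ R → R ⊆ a.1 →
          (∀ (Z : Finset ℕ), (G.cutEdges R Z).Nonempty → (G.cutEdges a.1 Z).Nonempty ∨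
            (G.cutEdges a.1 Z = ∅ →
              (∃ e ∈ G.cutEdges R Z, ∃ v ∈ Z, 0 < dirT ((restr O' (G.E \ R)) e) (G.ends e) v) ∧
              (∃ e ∈ G.cutEdges R Z, ∃ v ∈ G.V \ Z,
                0 < dirT ((restr O' (G.E \ R)) e) (G.ends e) v))) →
          G.TotCyc R (restr O' (G.E \ R)) := by
        intro R hTR hRS hcase Z hZV hZne hZneV hcutne
        have hsubSR : G.E \ a.1 ⊆ G.E \ R :=
          Finset.sdiff_subset_sdiff (Finset.Subset.refl _) hRS
        have hsubcut : G.cutEdges a.1 Z ⊆ G.cutEdges R Z := by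
          intro f hf
          rw [MGraph.cutEdges, Finset.mem_filter] at hf ⊢
          exact ⟨hsubSR hf.1, hf.2⟩
        rcases hcase Z hcutne with hcutS | hspecial
        · obtain ⟨⟨e1, he1, v1, hv1, hd1⟩, ⟨e2, he2, v2, hv2, hd2⟩⟩ :=
            htcSres Z hZV hZne hZneV hcutS
          have he1ES : e1 ∈ G.E \ a.1 := Finset.filter_subset _ _ he1
          have he2ES : e2 ∈ G.E \ a.1 := Finset.filter_subset _ _ he2
          refine ⟨⟨e1, hsubcut he1, v1, hv1, ?_⟩, ⟨e2, hsubcut he2, v2, hv2, ?_⟩⟩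
          · rw [restr_apply_mem (hsubSR he1ES)]
            rw [restr_apply_mem he1ES] at hd1
            exact hd1
          · rw [restr_apply_mem (hsubSR he2ES)]
            rw [restr_apply_mem he2ES] at hd2
            exact hd2
        · by_cases hcutS : (G.cutEdges a.1 Z).Nonempty
          · obtain ⟨⟨e1, he1, v1, hv1, hd1⟩, ⟨e2, he2, v2, hv2, hd2⟩⟩ :=
              htcSres Z hZV hZne hZneV hcutS
            have he1ES : e1 ∈ G.E \ a.1 := Finset.filter_subset _ _ he1
            have he2ES : e2 ∈ G.E \ a.1 := Finset.filter_subset _ _ he2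
            refine ⟨⟨e1, hsubcut he1, v1, hv1, ?_⟩, ⟨e2, hsubcut he2, v2, hv2, ?_⟩⟩
            · rw [restr_apply_mem (hsubSR he1ES)]
              rw [restr_apply_mem he1ES] at hd1
              exact hd1
            · rw [restr_apply_mem (hsubSR he2ES)]
              rw [restr_apply_mem he2ES] at hd2
              exact hd2
          · exact hspecial (Finset.not_nonempty_iff_eq_empty.1 hcutS)
      by_cases hcaseA : ∃ e ∈ a.1 \ a'.1,
          Relation.EqvGen (G.adjOn (G.E \ a.1)) (G.ends e).1 (G.ends e).2
      · -- Case A : some chord closes up inside a component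
        obtain ⟨e, he, hconn'⟩ := hcaseA
        set R := a.1.erase e with hR
        have hTR : a'.1 ⊆ R := by
          intro t ht
          rw [hR, Finset.mem_erase]
          exact ⟨fun hc => (Finset.mem_sdiff.1 he).2 (hc ▸ ht), hsub ht⟩
        have hRS : R ⊆ a.1 := Finset.erase_subset _ _
        have hRneS : R ≠ a.1 := fun h =>
          (Finset.erase_eq_self.1 h) (Finset.mem_sdiff.1 he).1
        have hRneT : R ≠ a'.1 := by
          obtain ⟨f, hf, hfne⟩ := htwo hk2 e he
          intro h
          have : f ∈ R := Finset.mem_erase.2 ⟨hfne, (Finset.mem_sdiff.1 hf).1⟩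
          rw [h] at this
          exact (Finset.mem_sdiff.1 hf).2 this
        have hsubR : G.E \ R ⊆ G.E \ a'.1 :=
          Finset.sdiff_subset_sdiff (Finset.Subset.refl _) hTR
        have horR : G.IsOrientOn R (restr O' (G.E \ R)) := G.isOrientOn_restr hO'T.1 hsubR
        have hbiR : G.biE (restr O' (G.E \ R)) = ∅ := by
          rw [G.biE_restr, hbiO']
          exact Finset.empty_inter _
        have htcRR : G.TotCyc R (restr O' (G.E \ R)) := by
          apply htcR R hTR hRS
          intro Z hcutne
          by_cases hcutS : (G.cutEdges a.1 Z).Nonempty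
          · exact Or.inl hcutS
          · right
            intro hcutS0
            exfalso
            obtain ⟨f, hf⟩ := hcutne
            rw [MGraph.cutEdges, Finset.mem_filter] at hf
            obtain ⟨hfER, hfpat⟩ := hf
            by_cases hfES : f ∈ G.E \ a.1
            · have : f ∈ G.cutEdges a.1 Z := by
                rw [MGraph.cutEdges, Finset.mem_filter]
                exact ⟨hfES, hfpat⟩
              rw [hcutS0] at this
              exact absurd this (Finset.notMem_empty f)
            · have hfe : f = e := by
                rw [Finset.mem_sdiff, hR, Finset.mem_erase] at hfER
                have hfS : f ∈ a.1 := by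
                  by_contra hc
                  exact hfES (Finset.mem_sdiff.2 ⟨hfER.1, hc⟩)
                by_contra hc
                exact hfER.2 ⟨hc, hfS⟩
              subst hfe
              obtain ⟨g, hg, hgpat⟩ := G.cross_of_eqvGen (Z := (↑Z : Set ℕ)) hconn' (by
                simp only [Finset.mem_coe]
                tauto)
              rw [Finset.inter_eq_left.2 (Finset.sdiff_subset)] at hg
              have : g ∈ G.cutEdges a.1 Z := by
                rw [MGraph.cutEdges, Finset.mem_filter]
                simp only [Finset.mem_coe] at hgpat
                exact ⟨hg, hgpat⟩
              rw [hcutS0] at this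
              exact absurd this (Finset.notMem_empty g)
        exact hinterp R hTR hRS hRneS hRneT
          ⟨hRS.trans hSE, Or.inl ⟨rfl, G.no_bridge_of_totcyc horR hbiR htcRR⟩⟩
          ⟨horR, Or.inl ⟨rfl, hbiR, htcRR⟩⟩
      · -- Case B : all extra edges join distinct components; extract a directed cycle
        push_neg at hcaseA
        have hval : ∀ e ∈ G.E \ a'.1, O' e = some EdgeDir.fwd ∨ O' e = some EdgeDir.bwd := by
          intro e he
          have h1 : O' e ≠ none := (hO'T.1 e).2 he
          have h2 : O' e ≠ some EdgeDir.bi := by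
            intro hc
            have : e ∈ G.biE O' := G.mem_biE_iff.2 ⟨(Finset.mem_sdiff.1 he).1, hc⟩
            rw [hbiO'] at this
            exact absurd this (Finset.notMem_empty e)
          rcases hOe : O' e with _ | d
          · exact absurd hOe h1
          · rcases d with _ | _ | _
            · exact Or.inl rfl
            · exact Or.inr rfl
            · exact absurd hOe h2
        set tl : ℕ → ℕ :=
          fun e => if O' e = some EdgeDir.fwd then (G.ends e).1 else (G.ends e).2 with htl
        set hd : ℕ → ℕ :=
          fun e => if O' e = some EdgeDir.fwd then (G.ends e).2 else (G.ends e).1 with hhd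
        have hSTsub : a.1 \ a'.1 ⊆ G.E \ a'.1 := by
          intro x hx
          rw [Finset.mem_sdiff] at hx ⊢
          exact ⟨hSE hx.1, hx.2⟩
        have hpat : ∀ (Z : Finset ℕ) (e : ℕ),
            (((G.ends e).1 ∈ Z ∧ (G.ends e).2 ∉ Z) ∨ ((G.ends e).1 ∉ Z ∧ (G.ends e).2 ∈ Z)) ↔
            ((tl e ∈ Z ∧ hd e ∉ Z) ∨ (tl e ∉ Z ∧ hd e ∈ Z)) := by
          intro Z e
          simp only [htl, hhd]
          by_cases h : O' e = some EdgeDir.fwd <;> simp [h] <;> tauto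
        have hmemV : ∀ e ∈ G.E, tl e ∈ G.V ∧ hd e ∈ G.V := by
          intro e he
          have hm := G.ends_mem e he
          simp only [htl, hhd]
          split
          · exact ⟨hm.1, hm.2⟩
          · exact ⟨hm.2, hm.1⟩
        have hdpos : ∀ e ∈ G.E \ a'.1, 0 < dirT (O' e) (G.ends e) (hd e) := by
          intro e he
          rcases hval e he with h | h <;> rw [h] <;> simp [dirT, hhd, h]
        have hdtgt : ∀ e ∈ G.E \ a'.1, ∀ v, 0 < dirT (O' e) (G.ends e) v → v = hd e := by
          intro e he v hv
          rcases hval e he with h | h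
          · rw [h] at hv
            simp only [dirT] at hv
            split at hv
            · rename_i hh
              simp only [hhd, if_pos h]
              exact hh.symm
            · omega
          · rw [h] at hv
            simp only [dirT] at hv
            split at hv
            · rename_i hh
              have hne2 : O' e ≠ some EdgeDir.fwd := by rw [h]; simp
              simp only [hhd, if_neg hne2]
              exact hh.symm
            · omega
        have hadj_e : ∀ e ∈ G.E \ a'.1,
            Relation.EqvGen (G.adjOn (G.E \ a'.1)) (tl e) (hd e) := by
          intro e he
          have hrel := G.adjOn_of_edge (F := G.E \ a'.1) he (Finset.mem_sdiff.1 he).1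
          by_cases h : O' e = some EdgeDir.fwd
          · simp only [htl, hhd, if_pos h]
            exact Relation.EqvGen.rel _ _ hrel
          · simp only [htl, hhd, if_neg h]
            exact Relation.EqvGen.symm _ _ (Relation.EqvGen.rel _ _ hrel)
        have hchain : ∀ e ∈ a.1 \ a'.1, ∃ e', e' ∈ a.1 \ a'.1 ∧
            Relation.EqvGen (G.adjOn (G.E \ a.1)) (tl e') (hd e) := by
          intro e he
          have heET : e ∈ G.E \ a'.1 := hSTsub he
          have heE : e ∈ G.E := (Finset.mem_sdiff.1 heET).1
          have hhdV : hd e ∈ G.V := (hmemV e heE).2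
          have htlV : tl e ∈ G.V := (hmemV e heE).1
          set Z := G.V.filter
            (fun v => Relation.EqvGen (G.adjOn (G.E \ a.1)) v (hd e)) with hZ
          have hhdZ : hd e ∈ Z := Finset.mem_filter.2 ⟨hhdV, Relation.EqvGen.refl _⟩
          have htlZ : tl e ∉ Z := by
            intro hc
            have h1 := (Finset.mem_filter.1 hc).2
            apply hcaseA e he
            by_cases h : O' e = some EdgeDir.fwd
            · have h2 : tl e = (G.ends e).1 := by simp only [htl, if_pos h]
              have h3 : hd e = (G.ends e).2 := by simp only [hhd, if_pos h]
              rw [h2, h3] at h1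
              exact h1
            · have h2 : tl e = (G.ends e).2 := by simp only [htl, if_neg h]
              have h3 : hd e = (G.ends e).1 := by simp only [hhd, if_neg h]
              rw [h2, h3] at h1
              exact Relation.EqvGen.symm _ _ h1
          have hZV : Z ⊆ G.V := Finset.filter_subset _ _
          have hZne : Z.Nonempty := ⟨hd e, hhdZ⟩
          have hZneV : Z ≠ G.V := by
            intro hc
            rw [hc] at htlZ
            exact htlZ htlV
          have hclosed : ∀ x y, x ∈ Z → G.adjOn (G.E \ a.1) x y → y ∈ Z := by
            intro x y hx hxy
            refine Finset.mem_filter.2 ⟨(G.adjOn_mem_V hxy).2, ?_⟩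
            exact Relation.EqvGen.trans _ _ _
              (Relation.EqvGen.symm _ _ (Relation.EqvGen.rel _ _ hxy))
              (Finset.mem_filter.1 hx).2
          have hecut : e ∈ G.cutEdges a'.1 Z := by
            rw [MGraph.cutEdges, Finset.mem_filter]
            exact ⟨heET, (hpat Z e).2 (Or.inr ⟨htlZ, hhdZ⟩)⟩
          obtain ⟨_, f, hfcut, v, hv, hdv⟩ := htcO' Z hZV hZne hZneV ⟨e, hecut⟩
          have hfET : f ∈ G.E \ a'.1 := Finset.filter_subset _ _ hfcut
          have hfE : f ∈ G.E := (Finset.mem_sdiff.1 hfET).1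
          have hvhd : v = hd f := hdtgt f hfET v hdv
          have hhdfZ : hd f ∉ Z := by
            rw [← hvhd]
            exact (Finset.mem_sdiff.1 hv).2
          have hfpat := (Finset.mem_filter.1 hfcut).2
          have hfpat' := (hpat Z f).1 hfpat
          have htlfZ : tl f ∈ Z := by
            rcases hfpat' with ⟨h1, _⟩ | ⟨_, h2⟩
            · exact h1
            · exact absurd h2 hhdfZ
          have hfST : f ∈ a.1 \ a'.1 := by
            rw [Finset.mem_sdiff]
            refine ⟨?_, (Finset.mem_sdiff.1 hfET).2⟩
            by_contra hc
            have hfES : f ∈ G.E \ a.1 := Finset.mem_sdiff.2 ⟨hfE, hc⟩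
            have hrel := G.adjOn_of_edge (F := G.E \ a.1) hfES hfE
            rcases hfpat with ⟨h1, h2⟩ | ⟨h1, h2⟩
            · exact h2 (hclosed _ _ h1 hrel)
            · exact h1 (hclosed _ _ h2 (G.adjOn_symm hrel))
          exact ⟨f, hfST, (Finset.mem_filter.1 htlfZ).2⟩
        -- the iterated chain
        obtain ⟨e0, he0⟩ := hSTne
        choose gnext hg1 hg2 using hchain
        set Fseq : ℕ → {x : ℕ // x ∈ a.1 \ a'.1} := fun n =>
          Nat.rec ⟨e0, he0⟩ (fun _ p => ⟨gnext p.1 p.2, hg1 p.1 p.2⟩) n with hFseq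
        have hstep : ∀ n, Relation.EqvGen (G.adjOn (G.E \ a.1))
            (tl (Fseq (n+1)).1) (hd (Fseq n).1) := by
          intro n
          exact hg2 (Fseq n).1 (Fseq n).2
        set φ : ℕ → ℕ := fun n => G.compRep a.1 (tl (Fseq n).1) with hφ
        set N := (G.V.image (G.compRep a.1)).card with hN
        have hmaps : ∀ n ∈ Finset.range (N + 1), φ n ∈ G.V.image (G.compRep a.1) := by
          intro n _
          exact Finset.mem_image_of_mem _
            (hmemV (Fseq n).1 (hSE (Finset.mem_sdiff.1 (Fseq n).2).1)).1
        obtain ⟨i, _, j, _, hij, hφij⟩ := Finset.exists_ne_map_eq_of_card_lt_of_maps_to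
          (by rw [Finset.card_range]; omega) hmaps
        have hex : ∃ m, ∃ i', i' < m ∧ φ i' = φ m := by
          rcases Nat.lt_or_ge i j with h | h
          · exact ⟨j, i, h, hφij⟩
          · have hji : j < i := by
              rcases Nat.lt_or_ge j i with h' | h'
              · exact h'
              · omega
            exact ⟨i, j, hji, hφij.symm⟩
        set j₀ := Nat.find hex with hj₀
        obtain ⟨i₀, hi₀lt, hφeq⟩ := Nat.find_spec hex
        have hminj : ∀ m, m < j₀ → ¬∃ i', i' < m ∧ φ i' = φ m :=
          fun m hm => Nat.find_min hex hm
        have hφinj : ∀ m m', m < m' → m' < j₀ → φ m ≠ φ m' := by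
          intro m m' hmm' hm'j heq
          exact hminj m' hm'j ⟨m, hmm', heq⟩
        set C := (Finset.Ico i₀ j₀).image (fun m => (Fseq m).1) with hC
        have hCsub : C ⊆ a.1 \ a'.1 := by
          intro x hx
          rw [hC, Finset.mem_image] at hx
          obtain ⟨m, _, rfl⟩ := hx
          exact (Fseq m).2
        have hCne : C.Nonempty :=
          ⟨(Fseq i₀).1, Finset.mem_image_of_mem _ (Finset.mem_Ico.2 ⟨le_refl _, hi₀lt⟩)⟩
        have hCcard : C.card = j₀ - i₀ := by
          rw [hC, Finset.card_image_of_injOn ?_, Nat.card_Ico]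
          intro m hm m' hm' heq
          have heq' : (Fseq m).1 = (Fseq m').1 := heq
          rcases lt_trichotomy m m' with h | h | h
          · exfalso
            apply hφinj m m' h (Finset.mem_Ico.1 hm').2
            simp only [hφ]
            rw [heq']
          · exact h
          · exfalso
            apply hφinj m' m h (Finset.mem_Ico.1 hm).2
            simp only [hφ]
            rw [heq']
        have hconn_pair : ∀ m m', m ≤ m' → Relation.EqvGen (G.adjOn (G.E \ a'.1))
            (tl (Fseq m).1) (tl (Fseq m').1) := by
          intro m m' hmm'
          induction m', hmm' using Nat.le_induction with
          | base => exact Relation.EqvGen.refl _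
          | succ p hp ih =>
            have h1 : Relation.EqvGen (G.adjOn (G.E \ a'.1))
                (tl (Fseq (p+1)).1) (hd (Fseq p).1) :=
              OPAux.eqvGen_mono (fun x y hxy => Relation.EqvGen.rel _ _
                (G.adjOn_mono hsubESET hxy)) (hstep p)
            have h2 := hadj_e (Fseq p).1 (hSTsub (Fseq p).2)
            exact Relation.EqvGen.trans _ _ _ ih
              (Relation.EqvGen.trans _ _ _ h2 (Relation.EqvGen.symm _ _ h1))
        have hCproper : C ≠ a.1 \ a'.1 := by
          intro hCeq
          have hkc : k = j₀ - i₀ := by rw [hk, ← hCeq, hCcard]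
          have hmerge := G.ncomp_merge (F := G.E \ a.1) (F' := G.E \ a'.1) hsubESET
            (k := j₀ - i₀) (x := fun i => tl (Fseq (i₀ + (i : ℕ))).1) ?_ ?_ ?_
          · omega
          · intro i
            exact (hmemV (Fseq (i₀ + (i : ℕ))).1
              (hSE (Finset.mem_sdiff.1 (Fseq (i₀ + (i : ℕ))).2).1)).1
          · intro i j hne heqv
            have hφeq' : φ (i₀ + (i : ℕ)) = φ (i₀ + (j : ℕ)) := by
              simp only [hφ]
              exact G.compRep_eq_iff.2 heqv
            rcases lt_trichotomy (i : ℕ) (j : ℕ) with h | h | h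
            · have hji : i₀ + (j : ℕ) < j₀ := by
                have := j.2
                omega
              exact hφinj _ _ (by omega) hji hφeq'
            · exact hne (Fin.ext h)
            · have hii : i₀ + (i : ℕ) < j₀ := by
                have := i.2
                omega
              exact hφinj _ _ (by omega) hii hφeq'.symm
          · intro i j
            rcases Nat.le_total (i₀ + (i : ℕ)) (i₀ + (j : ℕ)) with h | h
            · exact hconn_pair _ _ h
            · exact Relation.EqvGen.symm _ _ (hconn_pair _ _ h)
        obtain ⟨fex, hfexmem, hfexC⟩ : ∃ x, x ∈ a.1 \ a'.1 ∧ x ∉ C := by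
          obtain ⟨x, hx1, hx2⟩ :=
            Finset.exists_of_ssubset (hCsub.ssubset_of_ne hCproper)
          exact ⟨x, hx1, hx2⟩
        set R := a.1 \ C with hR
        have hTR : a'.1 ⊆ R := by
          intro t ht
          rw [hR, Finset.mem_sdiff]
          exact ⟨hsub ht, fun hc => (Finset.mem_sdiff.1 (hCsub hc)).2 ht⟩
        have hRS : R ⊆ a.1 := Finset.sdiff_subset
        have hRneS : R ≠ a.1 := by
          obtain ⟨c, hc⟩ := hCne
          intro h
          have hcR : c ∉ R := fun hh => (Finset.mem_sdiff.1 hh).2 hc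
          rw [h] at hcR
          exact hcR (Finset.mem_sdiff.1 (hCsub hc)).1
        have hRneT : R ≠ a'.1 := by
          intro h
          have : fex ∈ R := Finset.mem_sdiff.2 ⟨(Finset.mem_sdiff.1 hfexmem).1, hfexC⟩
          rw [h] at this
          exact (Finset.mem_sdiff.1 hfexmem).2 this
        have hsubR : G.E \ R ⊆ G.E \ a'.1 :=
          Finset.sdiff_subset_sdiff (Finset.Subset.refl _) hTR
        have horR : G.IsOrientOn R (restr O' (G.E \ R)) := G.isOrientOn_restr hO'T.1 hsubR
        have hbiR : G.biE (restr O' (G.E \ R)) = ∅ := by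
          rw [G.biE_restr, hbiO']
          exact Finset.empty_inter _
        have hCER : C ⊆ G.E \ R := by
          intro c hc
          rw [Finset.mem_sdiff]
          exact ⟨hSE (Finset.mem_sdiff.1 (hCsub hc)).1,
            fun hh => (Finset.mem_sdiff.1 hh).2 hc⟩
        have htcRR : G.TotCyc R (restr O' (G.E \ R)) := by
          apply htcR R hTR hRS
          intro Z hcutne
          by_cases hcutS : (G.cutEdges a.1 Z).Nonempty
          · exact Or.inl hcutS
          · right
            intro hcutS0
            have hZsat : ∀ u v, Relation.EqvGen (G.adjOn (G.E \ a.1)) u v →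
                (u ∈ Z ↔ v ∈ Z) := fun u v h => G.mem_iff_of_no_cut hcutS0 h
            set uu : ℕ → Prop := fun m => tl (Fseq m).1 ∈ Z with huu
            have htransm : ∀ m, (hd (Fseq m).1 ∈ Z) ↔ uu (m+1) :=
              fun m => (hZsat _ _ (hstep m)).symm
            have hcyc : uu i₀ ↔ uu j₀ := hZsat _ _ (G.compRep_eq_iff.1 hφeq)
            obtain ⟨f, hf⟩ := hcutne
            rw [MGraph.cutEdges, Finset.mem_filter] at hf
            obtain ⟨hfER, hfp⟩ := hf
            have hfC : f ∈ C := by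
              by_cases hfES : f ∈ G.E \ a.1
              · exfalso
                have : f ∈ G.cutEdges a.1 Z := by
                  rw [MGraph.cutEdges, Finset.mem_filter]
                  exact ⟨hfES, hfp⟩
                rw [hcutS0] at this
                exact absurd this (Finset.notMem_empty f)
              · rw [Finset.mem_sdiff] at hfER
                have hfS : f ∈ a.1 := by
                  by_contra hc
                  exact hfES (Finset.mem_sdiff.2 ⟨hfER.1, hc⟩)
                by_contra hc
                exact hfER.2 (Finset.mem_sdiff.2 ⟨hfS, hc⟩)
            obtain ⟨m₀, hm₀Ico, hfm₀⟩ := Finset.mem_image.1 (hC ▸ hfC)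
            rw [Finset.mem_Ico] at hm₀Ico
            have hfpat' := (hpat Z (Fseq m₀).1).1 (hfm₀ ▸ hfp)
            have htr : ¬(uu m₀ ↔ uu (m₀+1)) := by
              rw [← htransm m₀]
              rcases hfpat' with ⟨h1, h2⟩ | ⟨h1, h2⟩
              · intro hiff
                exact h2 (hiff.1 h1)
              · intro hiff
                exact h1 (hiff.2 h2)
            obtain ⟨⟨l1, hl1i, hl1j, hul1, hul1'⟩, ⟨l2, hl2i, hl2j, hul2, hul2'⟩⟩ :=
              OPAux.bool_cycle uu i₀ j₀ (le_of_lt hi₀lt) hcyc m₀ hm₀Ico.1 hm₀Ico.2 htr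
            have hmkcut : ∀ l, i₀ ≤ l → l < j₀ → ¬(uu l ↔ uu (l+1)) →
                (Fseq l).1 ∈ G.cutEdges R Z ∧
                0 < dirT ((restr O' (G.E \ R)) (Fseq l).1) (G.ends (Fseq l).1)
                  (hd (Fseq l).1) ∧
                hd (Fseq l).1 ∈ G.V := by
              intro l hli hlj hlne
              have hlC : (Fseq l).1 ∈ C :=
                Finset.mem_image_of_mem _ (Finset.mem_Ico.2 ⟨hli, hlj⟩)
              have hlER : (Fseq l).1 ∈ G.E \ R := hCER hlC
              have hlET : (Fseq l).1 ∈ G.E \ a'.1 := hSTsub (Fseq l).2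
              have hlpat : (tl (Fseq l).1 ∈ Z ∧ hd (Fseq l).1 ∉ Z) ∨
                  (tl (Fseq l).1 ∉ Z ∧ hd (Fseq l).1 ∈ Z) := by
                rw [← htransm l] at hlne
                by_cases h1 : tl (Fseq l).1 ∈ Z
                · exact Or.inl ⟨h1, fun h2 => hlne ⟨fun _ => h2, fun _ => h1⟩⟩
                · refine Or.inr ⟨h1, ?_⟩
                  by_contra h2
                  exact hlne (iff_of_false h1 h2)
              refine ⟨?_, ?_, (hmemV _ (Finset.mem_sdiff.1 hlET).1).2⟩
              · rw [MGraph.cutEdges, Finset.mem_filter]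
                exact ⟨hlER, (hpat Z _).2 hlpat⟩
              · rw [restr_apply_mem hlER]
                exact hdpos _ hlET
            constructor
            · obtain ⟨hcut2, hd2, _⟩ := hmkcut l2 hl2i hl2j
                (fun hiff => hul2 (hiff.2 hul2'))
              exact ⟨(Fseq l2).1, hcut2, hd (Fseq l2).1, (htransm l2).2 hul2', hd2⟩
            · obtain ⟨hcut1, hd1, hV1⟩ := hmkcut l1 hl1i hl1j
                (fun hiff => hul1' (hiff.1 hul1))
              exact ⟨(Fseq l1).1, hcut1, hd (Fseq l1).1,
                Finset.mem_sdiff.2 ⟨hV1, fun hc => hul1' ((htransm l1).1 hc)⟩, hd1⟩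
        exact hinterp R hTR hRS hRneS hRneT
          ⟨hRS.trans hSE, Or.inl ⟨rfl, G.no_bridge_of_totcyc horR hbiR htcRR⟩⟩
          ⟨horR, Or.inl ⟨rfl, hbiR, htcRR⟩⟩
    · -- b = 1
      have h1 : G.ncomp G.V (G.E \ a.1) = 1 := G.ab_one_conn hAbS
      have h2 : G.ncomp G.V (G.E \ a'.1) = 1 := G.ab_one_conn hAbT
      have hk2 : 2 ≤ k := by omega
      have hMemTO' : G.MemOb a'.1 1 O' := G.memOb_of_equiv (G.equivOr_symm hO'T) hMemT
      have hMemSres : G.MemOb a.1 1 (restr O' (G.E \ a.1)) :=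
        G.memOb_of_equiv (G.equivOr_symm hO'S) hMemS
      by_cases hES : G.E \ a.1 = ∅
      · -- single-vertex case
        have hVone : G.V.card = 1 := by
          have hc := G.ab_one_conn hAbS
          have := G.ncomp_eq_card_of_no_edges
            (F := G.E \ a.1) (by rw [Finset.inter_eq_left.2 Finset.sdiff_subset, hES])
          rw [MGraph.ConnSub] at hc
          omega
        have hETne : G.E \ a'.1 ≠ ∅ := by
          obtain ⟨e, he⟩ := hSTne
          intro hc
          have : e ∈ G.E \ a'.1 := by
            rw [Finset.mem_sdiff] at he ⊢
            exact ⟨hSE he.1, he.2⟩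
          rw [hc] at this
          exact absurd this (Finset.notMem_empty e)
        have hr1 : G.Rooted1 a'.1 O' := by
          rcases hMemTO'.2 with ⟨hc, _⟩ | ⟨_, h⟩
          · exact absurd hc (by norm_num)
          · exact h
        have hr1' : ∃ e₀, G.biE O' = {e₀} ∧ G.RootedAt a'.1 O' e₀ := by
          rcases hr1 with h | ⟨hc, _⟩
          · exact h
          · exact absurd hc hETne
        obtain ⟨e₀, hbi₀, -⟩ := hr1' 
        have he₀bi' : O' e₀ = some EdgeDir.bi :=
          (G.mem_biE_iff.1 (hbi₀ ▸ Finset.mem_singleton_self e₀)).2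
        have he₀ET : e₀ ∈ G.E \ a'.1 := (hO'T.1 e₀).1 (by rw [he₀bi']; simp)
        have he₀ST : e₀ ∈ a.1 \ a'.1 := by
          rw [Finset.mem_sdiff] at he₀ET ⊢
          refine ⟨?_, he₀ET.2⟩
          by_contra hc
          have : e₀ ∈ G.E \ a.1 := Finset.mem_sdiff.2 ⟨he₀ET.1, hc⟩
          rw [hES] at this
          exact absurd this (Finset.notMem_empty e₀)
        set R := a.1.erase e₀ with hR
        have hTR : a'.1 ⊆ R := by
          intro t ht
          rw [hR, Finset.mem_erase]
          exact ⟨fun hc => (Finset.mem_sdiff.1 he₀ST).2 (hc ▸ ht), hsub ht⟩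
        have hRS : R ⊆ a.1 := Finset.erase_subset _ _
        have hRneS : R ≠ a.1 := by
          intro h
          exact (Finset.erase_eq_self.1 h) (Finset.mem_sdiff.1 he₀ST).1
        have hRneT : R ≠ a'.1 := by
          obtain ⟨f, hf, hfne⟩ := htwo hk2 e₀ he₀ST
          intro h
          have : f ∈ R := Finset.mem_erase.2 ⟨hfne, (Finset.mem_sdiff.1 hf).1⟩
          rw [h] at this
          exact (Finset.mem_sdiff.1 hf).2 this
        have hsubR : G.E \ R ⊆ G.E \ a'.1 :=
          Finset.sdiff_subset_sdiff (Finset.Subset.refl _) hTR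
        have horR : G.IsOrientOn R (restr O' (G.E \ R)) := G.isOrientOn_restr hO'T.1 hsubR
        have he₀ER : e₀ ∈ G.E \ R := by
          rw [Finset.mem_sdiff, hR, Finset.mem_erase]
          exact ⟨hSE (Finset.mem_sdiff.1 he₀ST).1, fun hc => hc.1 rfl⟩
        have hbiR : G.biE (restr O' (G.E \ R)) = {e₀} := by
          rw [G.biE_restr, hbi₀]
          exact Finset.singleton_inter_of_mem he₀ER
        have hrtR : G.RootedAt R (restr O' (G.E \ R)) e₀ := by
          intro Z hZV hZneV hind
          exfalso
          obtain ⟨v, hVv⟩ := Finset.card_eq_one.1 hVone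
          have hZ : Z = ∅ := by
            rw [hVv] at hZV hZneV
            rcases Finset.subset_singleton_iff.1 hZV with h | h
            · exact h
            · exact absurd h hZneV
          rw [MGraph.indEdges, Finset.mem_filter, hZ] at hind
          exact absurd hind.2.1 (Finset.notMem_empty _)
        exact hinterp R hTR hRS hRneS hRneT
          ⟨hRS.trans hSE, Or.inr ⟨rfl, G.ncomp_one_of_card_one hVone⟩⟩
          ⟨horR, Or.inr ⟨rfl, Or.inl ⟨e₀, hbiR, hrtR⟩⟩⟩
      · -- generic connected case
        have hr1S : G.Rooted1 a.1 (restr O' (G.E \ a.1)) := by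
          rcases hMemSres.2 with ⟨hc, _⟩ | ⟨_, h⟩
          · exact absurd hc (by norm_num)
          · exact h
        have hr1S' : ∃ e₀, G.biE (restr O' (G.E \ a.1)) = {e₀} ∧
            G.RootedAt a.1 (restr O' (G.E \ a.1)) e₀ := by
          rcases hr1S with h | ⟨hc, _⟩
          · exact h
          · exact absurd hc hES
        obtain ⟨e₀, hbi₀, hrt₀⟩ := hr1S' 
        have he₀bi : (restr O' (G.E \ a.1)) e₀ = some EdgeDir.bi :=
          (G.mem_biE_iff.1 (hbi₀ ▸ Finset.mem_singleton_self e₀)).2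
        have he₀ES : e₀ ∈ G.E \ a.1 := by
          by_contra hc
          rw [restr_apply_not_mem hc] at he₀bi
          exact absurd he₀bi.symm (by simp)
        have he₀O' : O' e₀ = some EdgeDir.bi := by
          rw [restr_apply_mem he₀ES] at he₀bi
          exact he₀bi
        have hETne : G.E \ a'.1 ≠ ∅ := by
          intro hc
          have := hsubESET he₀ES
          rw [hc] at this
          exact absurd this (Finset.notMem_empty e₀)
        have hr1T : G.Rooted1 a'.1 O' := by
          rcases hMemTO'.2 with ⟨hc, _⟩ | ⟨_, h⟩
          · exact absurd hc (by norm_num)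
          · exact h
        have hr1T' : ∃ e₁, G.biE O' = {e₁} ∧ G.RootedAt a'.1 O' e₁ := by
          rcases hr1T with h | ⟨hc, _⟩
          · exact h
          · exact absurd hc hETne
        obtain ⟨e₁, hbi₁, -⟩ := hr1T' 
        have hbiO' : G.biE O' = {e₀} := by
          have : e₀ ∈ G.biE O' := G.mem_biE_iff.2 ⟨(Finset.mem_sdiff.1 he₀ES).1, he₀O'⟩
          rw [hbi₁, Finset.mem_singleton] at this
          rw [hbi₁, this]
        obtain ⟨e, he⟩ := hSTne
        set R := a.1.erase e with hR
        have hTR : a'.1 ⊆ R := by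
          intro t ht
          rw [hR, Finset.mem_erase]
          exact ⟨fun hc => (Finset.mem_sdiff.1 he).2 (hc ▸ ht), hsub ht⟩
        have hRS : R ⊆ a.1 := Finset.erase_subset _ _
        have hRneS : R ≠ a.1 := fun h =>
          (Finset.erase_eq_self.1 h) (Finset.mem_sdiff.1 he).1
        have hRneT : R ≠ a'.1 := by
          obtain ⟨f, hf, hfne⟩ := htwo hk2 e he
          intro h
          have : f ∈ R := Finset.mem_erase.2 ⟨hfne, (Finset.mem_sdiff.1 hf).1⟩
          rw [h] at this
          exact (Finset.mem_sdiff.1 hf).2 this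
        have hsubR : G.E \ R ⊆ G.E \ a'.1 :=
          Finset.sdiff_subset_sdiff (Finset.Subset.refl _) hTR
        have hsubSR : G.E \ a.1 ⊆ G.E \ R :=
          Finset.sdiff_subset_sdiff (Finset.Subset.refl _) hRS
        have horR : G.IsOrientOn R (restr O' (G.E \ R)) := G.isOrientOn_restr hO'T.1 hsubR
        have hbiR : G.biE (restr O' (G.E \ R)) = {e₀} := by
          rw [G.biE_restr, hbiO']
          exact Finset.singleton_inter_of_mem (hsubSR he₀ES)
        have hrtR : G.RootedAt R (restr O' (G.E \ R)) e₀ := by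
          intro Z hZV hZneV hind
          rw [MGraph.indEdges, Finset.mem_filter] at hind
          have hindS : e₀ ∈ G.indEdges a.1 Z := by
            rw [MGraph.indEdges, Finset.mem_filter]
            exact ⟨he₀ES, hind.2⟩
          obtain ⟨f, hf, v, hv, hd⟩ := hrt₀ Z hZV hZneV hindS
          have hfES : f ∈ G.E \ a.1 := Finset.filter_subset _ _ hf
          have hfcut : f ∈ G.cutEdges R Z := by
            rw [MGraph.cutEdges, Finset.mem_filter] at hf ⊢
            exact ⟨hsubSR hf.1, hf.2⟩
          refine ⟨f, hfcut, v, hv, ?_⟩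
          rw [restr_apply_mem (hsubSR hfES)]
          rw [restr_apply_mem hfES] at hd
          exact hd
        have hconnR : G.ConnSub G.V (G.E \ R) := by
          have hm : G.ncomp G.V (G.E \ R) ≤ G.ncomp G.V (G.E \ a.1) := G.ncomp_mono hsubSR
          have hVne : G.V.Nonempty :=
            ((G.ncomp_eq_one_iff (F := G.E \ a.1)).1 (G.ab_one_conn hAbS)).1
          have hp := G.ncomp_pos (F := G.E \ R) hVne
          have h1 := G.ab_one_conn hAbS
          rw [MGraph.ConnSub] at h1 ⊢
          omega
        exact hinterp R hTR hRS hRneS hRneT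
          ⟨hRS.trans hSE, Or.inr ⟨rfl, hconnR⟩⟩
          ⟨horR, Or.inr ⟨rfl, Or.inl ⟨e₀, hbiR, hrtR⟩⟩⟩
  -- conclude
  have hNR : G.ncomp G.V (G.E \ a.1) + 1 = k + G.ncomp G.V (G.E \ a'.1) := by omega
  have hgeq : G.subGenus G.V (G.E \ a'.1) = G.subGenus G.V (G.E \ a.1) + 1 := by
    rw [G.subGenus_sdiff, G.subGenus_sdiff]
    omega
  have hnn := G.subGenus_nonneg (G.E \ a.1)
  simp only []
  omega

end MGraph

/-- For `b = 0, 1` (with `G` connected if `b = 1`):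
the two conditions (i) "some representatives restrict correctly" and
(ii) "every representative of the smaller class is a restriction of a
representative of the bigger class" are equivalent; the resulting relation
makes `𝒪̄𝒫^b_G` into a poset; the forgetful map to `A^b_G` is a quotient of
posets; and `O̅_S ↦ g(G−S)` is a rank. -/
theorem OPbar_poset (G : MGraph) (b : ℕ) (hb : b = 0 ∨ b = 1)
    (hconn : b = 1 → G.Connected) :
    (∀ S T, G.Ab b S → G.Ab b T → T ⊆ S →
      ∀ OS OT, G.MemOb S b OS → G.MemOb T b OT →
        ((∃ OS' OT', G.equivOr S b OS' OS ∧ G.equivOr T b OT' OT ∧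
            restr OT' (G.E \ S) = OS') ↔
         (∀ OS', G.equivOr S b OS' OS →
            ∃ OT', G.equivOr T b OT' OT ∧ restr OT' (G.E \ S) = OS'))) ∧
    IsPartialOrderOnMod (G.POb b) (G.eqOP b) (G.leOPbar b) ∧
    IsPosetQuotient (G.POb b) (G.Ab b) (G.leOPbar b)
      (fun S S' => S' ⊆ S) Prod.fst ∧
    IsRankOnMod (G.POb b) (G.eqOP b) (G.leOPbar b)
      (fun p => (G.subGenus G.V (G.E \ p.1)).toNat) := by
  refine ⟨?_, G.part2 b, G.part3 b hb, G.part4 b hb⟩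
  intro S T hS hT hTS OS OT hOS hOT
  exact G.part1 hTS hOS hOT
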